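/- arXiv:1610.03538 — 12 statements merged into one kernel-verified Lean document; each statement's English description precedes it below -/
import Mathlib

section
/- Cramér–Rao bound on a finite sample space: Let Ω be a finite set and for each ε ∈ ℝ let p(·|ε) : Ω → ℝ be a probability distribution (p(x|ε) ≥ 0 and ∑_{x∈Ω} p(x|ε) = 1), such that for every x ∈ Ω the map ε ↦ p(x|ε) is differentiable at ε₀. Let ε̂ : Ω → ℝ be an estimator that is locally unbiased, i.e. ∑_{x∈Ω} ε̂(x) p(x|ε) = ε for all ε in a neighborhood of ε₀. Define the Fisher information F(ε₀) := ∑_{x : p(x|ε₀) > 0} (∂_ε p(x|ε₀))² / p(x|ε₀) and assume F(ε₀) > 0. Then the mean squared error of the estimator satisfies ∑_{x∈Ω} (ε̂(x) − ε₀)² p(x|ε₀) ≥ 1 / F(ε₀). -/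
/-- Cramér–Rao bound on a finite sample space. -/
theorem cramer_rao_finite
    {Ω : Type*} [Fintype Ω]
    (p : ℝ → Ω → ℝ) (dp : Ω → ℝ) (ε₀ : ℝ) (est : Ω → ℝ)
    (hnonneg : ∀ ε x, 0 ≤ p ε x)
    (hsum : ∀ ε, ∑ x, p ε x = 1)
    (hderiv : ∀ x, HasDerivAt (fun ε => p ε x) (dp x) ε₀)
    (hunbiased : ∀ᶠ ε in nhds ε₀, ∑ x, est x * p ε x = ε)
    (F : ℝ)
    (hF : F = ∑ x, if 0 < p ε₀ x then (dp x) ^ 2 / p ε₀ x else 0)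
    (hFpos : 0 < F) :
    1 / F ≤ ∑ x, (est x - ε₀) ^ 2 * p ε₀ x := by
  -- dp x = 0 whenever p ε₀ x = 0 (local minimum)
  have hdp0 : ∀ x, p ε₀ x = 0 → dp x = 0 := by
    intro x hx
    have hmin : IsLocalMin (fun ε => p ε x) ε₀ := by
      apply Filter.Eventually.of_forall
      intro ε
      simpa [hx] using hnonneg ε x
    exact hmin.hasDerivAt_eq_zero (hderiv x)
  -- ∑ dp x = 0
  have hsum_dp : ∑ x, dp x = 0 := by
    have h1 : HasDerivAt (fun ε => ∑ x, p ε x) (∑ x, dp x) ε₀ :=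
      HasDerivAt.fun_sum (fun x _ => hderiv x)
    have h2 : HasDerivAt (fun ε => ∑ x, p ε x) 0 ε₀ := by
      have : HasDerivAt (fun _ : ℝ => (1 : ℝ)) 0 ε₀ := hasDerivAt_const _ _
      exact this.congr_of_eventuallyEq (Filter.Eventually.of_forall fun ε => hsum ε)
    exact h1.unique h2
  -- ∑ est x * dp x = 1
  have hsum_est : ∑ x, est x * dp x = 1 := by
    have h1 : HasDerivAt (fun ε => ∑ x, est x * p ε x) (∑ x, est x * dp x) ε₀ :=
      HasDerivAt.fun_sum (fun x _ => (hderiv x).const_mul (est x))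
    have h2 : HasDerivAt (fun ε => ∑ x, est x * p ε x) 1 ε₀ :=
      (hasDerivAt_id ε₀).congr_of_eventuallyEq (hunbiased.mono fun ε h => h)
    exact h1.unique h2
  set f : Ω → ℝ := fun x => (est x - ε₀) * Real.sqrt (p ε₀ x) with hf
  set g : Ω → ℝ := fun x => if 0 < p ε₀ x then dp x / Real.sqrt (p ε₀ x) else 0 with hg
  have hfg : ∀ x, f x * g x = (est x - ε₀) * dp x := by
    intro x
    by_cases hx : 0 < p ε₀ x
    · have hs : Real.sqrt (p ε₀ x) ≠ 0 := by positivity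
      simp only [hf, hg, if_pos hx]
      field_simp
    · have hx0 : p ε₀ x = 0 := le_antisymm (not_lt.mp hx) (hnonneg ε₀ x)
      simp [hf, hg, hx, hdp0 x hx0]
  have hsum_fg : ∑ x, f x * g x = 1 := by
    simp only [hfg]
    have : ∑ x, (est x - ε₀) * dp x = ∑ x, (est x * dp x - ε₀ * dp x) := by
      apply Finset.sum_congr rfl; intro x _; ring
    rw [this, Finset.sum_sub_distrib, hsum_est, ← Finset.mul_sum, hsum_dp]
    ring
  have hsum_f2 : ∑ x, f x ^ 2 = ∑ x, (est x - ε₀) ^ 2 * p ε₀ x := by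
    apply Finset.sum_congr rfl
    intro x _
    simp only [hf]
    rw [mul_pow, Real.sq_sqrt (hnonneg ε₀ x)]
  have hsum_g2 : ∑ x, g x ^ 2 = F := by
    rw [hF]
    apply Finset.sum_congr rfl
    intro x _
    by_cases hx : 0 < p ε₀ x
    · simp only [hg, if_pos hx]
      rw [div_pow, Real.sq_sqrt (hnonneg ε₀ x)]
    · simp [hg, hx]
  have hCS' : (∑ x, f x * g x) ^ 2 ≤ (∑ x, f x ^ 2) * (∑ x, g x ^ 2) :=
    Finset.sum_mul_sq_le_sq_mul_sq Finset.univ f g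
  rw [hsum_fg, hsum_f2, hsum_g2, one_pow] at hCS'
  rw [div_le_iff₀ hFpos]
  linarith
end

section
/- The measurement in the eigenbasis of the symmetric logarithmic derivative attains the quantum Fisher information: Let ρ, ρ', L be n×n complex matrices with ρ positive semidefinite, ρ' Hermitian, and L Hermitian satisfying the symmetric-logarithmic-derivative equation (Lρ + ρL)/2 = ρ'. Let L = ∑_x l_x P_x be a spectral decomposition of L, where the l_x are real, the P_x are Hermitian idempotents with P_x P_y = 0 for x ≠ y, ∑_x P_x = I, and L P_x = l_x P_x. Then the Fisher information of the projective measurement {P_x} equals the quantum Fisher information: ∑_{x : tr(P_x ρ) > 0} (tr(P_x ρ'))² / tr(P_x ρ) = tr(ρ L²) (all traces appearing here are real, since tr(P_x ρ) ≥ 0 and P_x, ρ' are Hermitian). -/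
open scoped ComplexOrder

lemma psd_trace_nonneg {n : ℕ} {A : Matrix (Fin n) (Fin n) ℂ} (hA : A.PosSemidef) :
    0 ≤ A.trace := by
  rw [Matrix.trace]
  apply Finset.sum_nonneg
  intro i _
  have := hA.2 (Finsupp.single i 1)
  simpa [Finsupp.sum_single_index, Matrix.diag] using this

/-- The projective measurement in the eigenbasis of the symmetric logarithmic
derivative attains the quantum Fisher information. -/
theorem sld_measurement_attains_qfi
    {n : ℕ} {ι : Type*} [Fintype ι]
    (ρ ρ' L : Matrix (Fin n) (Fin n) ℂ)
    (hρ : ρ.PosSemidef) (hρ' : ρ'.IsHermitian) (hL : L.IsHermitian)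
    (hSLD : (1 / 2 : ℂ) • (L * ρ + ρ * L) = ρ')
    (l : ι → ℝ) (P : ι → Matrix (Fin n) (Fin n) ℂ)
    (hPherm : ∀ x, (P x).IsHermitian)
    (hPidem : ∀ x, P x * P x = P x)
    (hPorth : ∀ x y, x ≠ y → P x * P y = 0)
    (hPsum : ∑ x, P x = 1)
    (hLP : ∀ x, L * P x = (l x : ℂ) • P x)
    (hLspec : L = ∑ x, (l x : ℂ) • P x) :
    ∑ x, (if 0 < ((P x * ρ).trace).re
        then (((P x * ρ').trace).re) ^ 2 / ((P x * ρ).trace).re else 0)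
      = ((ρ * L ^ 2).trace).re := by
  -- P x * L = l x • P x
  have hPL : ∀ x, P x * L = (l x : ℂ) • P x := by
    intro x
    have h := congrArg Matrix.conjTranspose (hLP x)
    simpa [Matrix.conjTranspose_mul, (hPherm x).eq, hL.eq, Matrix.conjTranspose_smul,
      Complex.star_def, Complex.conj_ofReal] using h
  -- trace(P x ρ) nonneg real
  have htnn : ∀ x, 0 ≤ (P x * ρ).trace := by
    intro x
    have hpsd := hρ.mul_mul_conjTranspose_same (P x)
    have h := psd_trace_nonneg hpsd
    rw [(hPherm x).eq] at h
    rwa [Matrix.trace_mul_cycle, hPidem x] at h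
  -- trace(P x ρ') = l x * trace(P x ρ)
  have htr : ∀ x, (P x * ρ').trace = (l x : ℂ) * (P x * ρ).trace := by
    intro x
    rw [← hSLD]
    have e1 : (P x * (L * ρ)).trace = (l x : ℂ) * (P x * ρ).trace := by
      rw [← mul_assoc, hPL x, Matrix.smul_mul, Matrix.trace_smul, smul_eq_mul]
    have e2 : (P x * (ρ * L)).trace = (l x : ℂ) * (P x * ρ).trace := by
      rw [← mul_assoc, Matrix.trace_mul_cycle, hLP x, Matrix.smul_mul,
        Matrix.trace_smul, smul_eq_mul]
    rw [Matrix.mul_smul, mul_add, Matrix.trace_smul, Matrix.trace_add, e1, e2, smul_eq_mul]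
    ring
  -- L^2 = ∑ l^2 • P
  have hL2 : L ^ 2 = ∑ x, ((l x : ℂ) ^ 2) • P x := by
    rw [sq]
    nth_rewrite 2 [hLspec]
    rw [Finset.mul_sum]
    refine Finset.sum_congr rfl fun x _ => ?_
    rw [Matrix.mul_smul, hLP x, smul_smul, sq]
  -- compute RHS
  have hRHS : (ρ * L ^ 2).trace = ∑ x, (l x : ℂ) ^ 2 * (P x * ρ).trace := by
    rw [hL2, Finset.mul_sum, Matrix.trace_sum]
    refine Finset.sum_congr rfl fun x _ => ?_
    rw [Matrix.mul_smul, Matrix.trace_smul, smul_eq_mul, Matrix.trace_mul_comm]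
  rw [hRHS, Complex.re_sum]
  refine Finset.sum_congr rfl fun x _ => ?_
  have ht := htnn x
  rw [Complex.nonneg_iff] at ht
  have him : ((P x * ρ).trace).im = 0 := ht.2.symm
  have hre : 0 ≤ ((P x * ρ).trace).re := ht.1
  have hre' : ((P x * ρ').trace).re = l x * ((P x * ρ).trace).re := by
    rw [htr x]
    simp [Complex.mul_re, him]
  have hrhs : ((l x : ℂ) ^ 2 * (P x * ρ).trace).re = (l x) ^ 2 * ((P x * ρ).trace).re := by
    rw [← Complex.ofReal_pow, Complex.re_ofReal_mul]
  rw [hrhs, hre']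
  by_cases hpos : 0 < ((P x * ρ).trace).re
  · rw [if_pos hpos]
    field_simp
  · rw [if_neg hpos]
    have : ((P x * ρ).trace).re = 0 := le_antisymm (not_lt.1 hpos) hre
    rw [this, mul_zero]
end

section
/- Nonnegativity of the quantum Fisher information after loss of a reference frame (lower bound in Theorem on precision loss): Let H be a finite-dimensional complex inner product space, ψ ∈ H a unit vector, ψ' ∈ H, and (P_i)_{i∈ι} a finite family of self-adjoint idempotent operators on H with P_i P_j = 0 for i ≠ j and ∑_i P_i = id; set p_i := ⟨ψ, P_i ψ⟩. Then ∑_{i : p_i > 0} (Im⟨ψ, P_i ψ'⟩)² / p_i ≤ ‖ψ'‖²; equivalently, Bob's quantum Fisher information H_B := 4‖ψ'‖² − 4 ∑_{i : p_i > 0} (Im⟨ψ, P_i ψ'⟩)² / p_i satisfies H_B ≥ 0. -/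
/-- Nonnegativity of the quantum Fisher information after loss of a common
reference frame: the twirled QFI
`H_B = 4‖ψ'‖² − 4 ∑_{i : p_i > 0} (Im⟨ψ, P_i ψ'⟩)² / p_i` is nonnegative,
stated as the equivalent inequality
`∑_{i : p_i > 0} (Im⟨ψ, P_i ψ'⟩)² / p_i ≤ ‖ψ'‖²`. -/
theorem qrf_twirled_qfi_nonneg
    {H : Type*} [NormedAddCommGroup H] [InnerProductSpace ℂ H] [FiniteDimensional ℂ H]
    {ι : Type*} [Fintype ι]
    (ψ ψ' : H) (hψ : ‖ψ‖ = 1)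
    (P : ι → H →L[ℂ] H)
    (hsa : ∀ i, IsSelfAdjoint (P i))
    (hidem : ∀ i, P i * P i = P i)
    (horth : ∀ i j, i ≠ j → P i * P j = 0)
    (hsum : ∑ i, P i = 1) :
    ∑ i, (if 0 < ((inner ℂ ψ (P i ψ) : ℂ)).re
        then ((inner ℂ ψ (P i ψ') : ℂ)).im ^ 2 / ((inner ℂ ψ (P i ψ) : ℂ)).re else 0)
      ≤ ‖ψ'‖ ^ 2 := by
  have hsym : ∀ i (x y : H), (inner ℂ (P i x) y : ℂ) = inner ℂ x (P i y) := fun i x y =>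
    (ContinuousLinearMap.isSelfAdjoint_iff_isSymmetric.mp (hsa i)) x y
  have happ : ∀ i (y : H), P i (P i y) = P i y := by
    intro i y
    have := congrFun (congrArg DFunLike.coe (hidem i)) y
    simpa using this
  have h1 : ∀ i (x y : H), (inner ℂ x (P i y) : ℂ) = inner ℂ (P i x) (P i y) := by
    intro i x y
    rw [hsym i x (P i y), happ]
  -- pointwise bound
  have hpt : ∀ i, (if 0 < ((inner ℂ ψ (P i ψ) : ℂ)).re
        then ((inner ℂ ψ (P i ψ') : ℂ)).im ^ 2 / ((inner ℂ ψ (P i ψ) : ℂ)).re else 0)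
      ≤ ‖P i ψ'‖ ^ 2 := by
    intro i
    split_ifs with hp
    · have hre : ((inner ℂ ψ (P i ψ) : ℂ)).re = ‖P i ψ‖ ^ 2 := by
        rw [h1 i ψ ψ]
        simpa using inner_self_eq_norm_sq (𝕜 := ℂ) (P i ψ)
      rw [hre] at hp ⊢
      rw [div_le_iff₀ hp]
      have him : ((inner ℂ ψ (P i ψ') : ℂ)).im ^ 2 ≤ ‖(inner ℂ ψ (P i ψ') : ℂ)‖ ^ 2 := by
        rw [Complex.sq_norm, Complex.normSq_apply]
        nlinarith [sq_nonneg ((inner ℂ ψ (P i ψ') : ℂ)).re]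
      have hcs : ‖(inner ℂ ψ (P i ψ') : ℂ)‖ ≤ ‖P i ψ‖ * ‖P i ψ'‖ := by
        rw [h1 i ψ ψ']
        exact norm_inner_le_norm _ _
      calc ((inner ℂ ψ (P i ψ') : ℂ)).im ^ 2 ≤ ‖(inner ℂ ψ (P i ψ') : ℂ)‖ ^ 2 := him
        _ ≤ (‖P i ψ‖ * ‖P i ψ'‖) ^ 2 := by
            exact pow_le_pow_left₀ (norm_nonneg _) hcs 2
        _ = ‖P i ψ'‖ ^ 2 * ‖P i ψ‖ ^ 2 := by ring
    · positivity
  -- sum of squares equals total norm squared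
  have hsumsq : ∑ i, ‖P i ψ'‖ ^ 2 = ‖ψ'‖ ^ 2 := by
    have : ∀ i, ‖P i ψ'‖ ^ 2 = ((inner ℂ ψ' (P i ψ') : ℂ)).re := by
      intro i
      rw [h1 i ψ' ψ']
      simpa using (inner_self_eq_norm_sq (𝕜 := ℂ) (P i ψ')).symm
    simp_rw [this]
    have hsum' : ∑ i, P i ψ' = ψ' := by
      have := congrFun (congrArg DFunLike.coe hsum) ψ'
      simpa using this
    rw [← Complex.re_sum, ← inner_sum, hsum']
    simpa using inner_self_eq_norm_sq (𝕜 := ℂ) ψ'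
  calc _ ≤ ∑ i, ‖P i ψ'‖ ^ 2 := Finset.sum_le_sum fun i _ => hpt i
    _ = ‖ψ'‖ ^ 2 := hsumsq
end

section
/- The quantum Fisher information decreases under loss of a reference frame (upper bound in Theorem on precision loss): Let H be a finite-dimensional complex inner product space, ψ ∈ H a unit vector, ψ' ∈ H with Re⟨ψ, ψ'⟩ = 0, and (P_i)_{i∈ι} a finite family of self-adjoint idempotent operators on H with P_i P_j = 0 for i ≠ j and ∑_i P_i = id; set p_i := ⟨ψ, P_i ψ⟩. Then |⟨ψ, ψ'⟩|² ≤ ∑_{i : p_i > 0} (Im⟨ψ, P_i ψ'⟩)² / p_i; equivalently, Bob's quantum Fisher information H_B := 4‖ψ'‖² − 4 ∑_{i : p_i > 0} (Im⟨ψ, P_i ψ'⟩)² / p_i does not exceed Alice's quantum Fisher information H_A := 4(‖ψ'‖² − |⟨ψ, ψ'⟩|²). -/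
/-- The quantum Fisher information decreases under loss of a reference frame:
`|⟨ψ, ψ'⟩|² ≤ ∑_{i : p_i > 0} (Im⟨ψ, P_i ψ'⟩)² / p_i`, equivalently Bob's QFI
`H_B = 4‖ψ'‖² − 4 ∑_{i : p_i > 0} (Im⟨ψ, P_i ψ'⟩)²/p_i` does not exceed
Alice's QFI `H_A = 4(‖ψ'‖² − |⟨ψ, ψ'⟩|²)`. -/
theorem qrf_twirled_qfi_le_qfi
    {H : Type*} [NormedAddCommGroup H] [InnerProductSpace ℂ H] [FiniteDimensional ℂ H]
    {ι : Type*} [Fintype ι]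
    (ψ ψ' : H) (hψ : ‖ψ‖ = 1)
    (hre : ((inner ℂ ψ ψ' : ℂ)).re = 0)
    (P : ι → H →L[ℂ] H)
    (hsa : ∀ i, IsSelfAdjoint (P i))
    (hidem : ∀ i, P i * P i = P i)
    (horth : ∀ i j, i ≠ j → P i * P j = 0)
    (hsum : ∑ i, P i = 1) :
    ‖(inner ℂ ψ ψ' : ℂ)‖ ^ 2
      ≤ ∑ i, (if 0 < ((inner ℂ ψ (P i ψ) : ℂ)).re
          then ((inner ℂ ψ (P i ψ') : ℂ)).im ^ 2 / ((inner ℂ ψ (P i ψ) : ℂ)).re else 0) := by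
  set a : ι → ℝ := fun i => ((inner ℂ ψ (P i ψ') : ℂ)).im with ha
  set q : ι → ℝ := fun i => ((inner ℂ ψ (P i ψ) : ℂ)).re with hqdef
  have hsym : ∀ i, ∀ x y : H, (inner ℂ (P i x) y : ℂ) = inner ℂ x (P i y) :=
    fun i => (hsa i).isSymmetric
  -- q i = ‖P i ψ‖ ^ 2
  have hq : ∀ i, q i = ‖P i ψ‖ ^ 2 := by
    intro i
    have h1 : P i (P i ψ) = P i ψ := by
      rw [← ContinuousLinearMap.mul_apply, hidem]
    have : (inner ℂ ψ (P i ψ) : ℂ) = inner ℂ (P i ψ) (P i ψ) := by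
      conv_lhs => rw [← h1]
      rw [← hsym i ψ (P i ψ)]
    simp only [hqdef, this]
    rw [inner_self_eq_norm_sq_to_K (𝕜 := ℂ)]
    norm_cast
  have hqnn : ∀ i, 0 ≤ q i := fun i => (hq i) ▸ sq_nonneg _
  -- if q i = 0 then a i = 0
  have hq0 : ∀ i, q i = 0 → a i = 0 := by
    intro i h
    have hP : P i ψ = 0 := by
      have := hq i ▸ h
      have : ‖P i ψ‖ = 0 := by nlinarith [norm_nonneg (P i ψ)]
      simpa using this
    have : (inner ℂ ψ (P i ψ') : ℂ) = inner ℂ (P i ψ) ψ' := (hsym i ψ ψ').symm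
    simp [ha, this, hP]
  -- sum of q is 1
  have hqsum : ∑ i, q i = 1 := by
    have h1 : ∑ i, (P i ψ) = ψ := by
      have := congrArg (fun T : H →L[ℂ] H => T ψ) hsum
      simpa using this
    have h2 : ∑ i, (inner ℂ ψ (P i ψ) : ℂ) = inner ℂ ψ ψ := by
      rw [← inner_sum, h1]
    have h3 : ((inner ℂ ψ ψ : ℂ)).re = 1 := by
      rw [inner_self_eq_norm_sq_to_K (𝕜 := ℂ), hψ]; norm_num
    calc ∑ i, q i = ((∑ i, (inner ℂ ψ (P i ψ) : ℂ))).re := by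
          rw [Complex.re_sum]
      _ = 1 := by rw [h2, h3]
  -- sum of a is the imaginary part
  have hasum : ∑ i, a i = ((inner ℂ ψ ψ' : ℂ)).im := by
    have h1 : ∑ i, (P i ψ') = ψ' := by
      have := congrArg (fun T : H →L[ℂ] H => T ψ') hsum
      simpa using this
    have h2 : ∑ i, (inner ℂ ψ (P i ψ') : ℂ) = inner ℂ ψ ψ' := by
      rw [← inner_sum, h1]
    calc ∑ i, a i = ((∑ i, (inner ℂ ψ (P i ψ') : ℂ))).im := by
          rw [Complex.im_sum]
      _ = _ := by rw [h2]
  -- LHS = (∑ a)²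
  have hlhs : ‖(inner ℂ ψ ψ' : ℂ)‖ ^ 2 = (∑ i, a i) ^ 2 := by
    rw [hasum]
    have := Complex.sq_norm (inner ℂ ψ ψ' : ℂ)
    rw [this, Complex.normSq_apply, hre]
    ring
  rw [hlhs]
  -- Cauchy–Schwarz
  have hCS := Finset.sum_mul_sq_le_sq_mul_sq Finset.univ
    (fun i => Real.sqrt (q i)) (fun i => a i / Real.sqrt (q i))
  have hfg : ∀ i, Real.sqrt (q i) * (a i / Real.sqrt (q i)) = a i := by
    intro i
    rcases eq_or_lt_of_le (hqnn i) with h | h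
    · rw [hq0 i h.symm]; simp
    · field_simp
  have hf2 : ∀ i, Real.sqrt (q i) ^ 2 = q i := fun i => Real.sq_sqrt (hqnn i)
  have hg2 : ∀ i, (a i / Real.sqrt (q i)) ^ 2
      = (if 0 < q i then a i ^ 2 / q i else 0) := by
    intro i
    rcases eq_or_lt_of_le (hqnn i) with h | h
    · rw [hq0 i h.symm]; simp [← h]
    · rw [if_pos h, div_pow, hf2 i]
  calc (∑ i, a i) ^ 2 = (∑ i, Real.sqrt (q i) * (a i / Real.sqrt (q i))) ^ 2 := by
        simp_rw [hfg]
    _ ≤ (∑ i, Real.sqrt (q i) ^ 2) * ∑ i, (a i / Real.sqrt (q i)) ^ 2 := hCS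
    _ = ∑ i, (if 0 < q i then a i ^ 2 / q i else 0) := by
        simp_rw [hf2, hg2, hqsum, one_mul]
end

section
/- No-loss condition (Theorem on precision loss, equality case H_B = H_A): Let H be a finite-dimensional complex inner product space, ψ ∈ H a unit vector, ψ' ∈ H with Re⟨ψ, ψ'⟩ = 0, and (P_i)_{i∈ι} a finite family of self-adjoint idempotent operators on H with P_i P_j = 0 for i ≠ j and ∑_i P_i = id; set p_i := ⟨ψ, P_i ψ⟩. Then Bob's quantum Fisher information H_B := 4‖ψ'‖² − 4 ∑_{i : p_i > 0} (Im⟨ψ, P_i ψ'⟩)² / p_i equals Alice's quantum Fisher information H_A := 4(‖ψ'‖² − |⟨ψ, ψ'⟩|²) if and only if for every i, Im⟨ψ, P_i ψ'⟩ = p_i · Im⟨ψ, ψ'⟩ (equivalently, Im⟨ψ, P_i ψ'⟩ = −i ⟨ψ, P_i ψ⟩ ⟨ψ, ψ'⟩, since ⟨ψ, ψ'⟩ is purely imaginary). -/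
open Finset in
/-- Real-arithmetic core: Cauchy–Schwarz-type equality condition. -/
lemma qrf_key {ι : Type*} [Fintype ι] (p a : ι → ℝ) (m : ℝ)
    (hp : ∀ i, 0 ≤ p i) (h0 : ∀ i, p i = 0 → a i = 0)
    (hps : ∑ i, p i = 1) (has : ∑ i, a i = m) :
    (∑ i, if 0 < p i then (a i) ^ 2 / p i else 0) = m ^ 2
      ↔ ∀ i, a i = p i * m := by
  set g : ι → ℝ := fun i => if 0 < p i then (a i - m * p i) ^ 2 / p i else 0 with hg
  have hterm : ∀ i, g i = (if 0 < p i then (a i) ^ 2 / p i else 0)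
      - 2 * m * a i + m ^ 2 * p i := by
    intro i
    by_cases h : 0 < p i
    · simp only [hg, h, if_pos]
      field_simp
      ring
    · have hp0 : p i = 0 := le_antisymm (not_lt.mp h) (hp i)
      have ha0 : a i = 0 := h0 i hp0
      simp [hg, h, hp0, ha0]
  have hgsum : ∑ i, g i = (∑ i, if 0 < p i then (a i) ^ 2 / p i else 0) - m ^ 2 := by
    rw [funext hterm]
    rw [Finset.sum_add_distrib, Finset.sum_sub_distrib, ← Finset.mul_sum, ← Finset.mul_sum,
      has, hps]
    ring
  have hgnn : ∀ i ∈ Finset.univ, 0 ≤ g i := by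
    intro i _
    by_cases h : 0 < p i
    · simp only [hg, h, if_pos]
      positivity
    · simp [hg, h]
  constructor
  · intro hS i
    have hz : ∑ i, g i = 0 := by rw [hgsum, hS]; ring
    have hgi := (Finset.sum_eq_zero_iff_of_nonneg hgnn).mp hz i (Finset.mem_univ i)
    by_cases h : 0 < p i
    · simp only [hg, h, if_pos] at hgi
      have h2 : (a i - m * p i) ^ 2 = 0 := by
        rcases div_eq_zero_iff.mp hgi with h' | h'
        · exact h'
        · exact absurd h' h.ne'
      have h3 : a i - m * p i = 0 := by
        nlinarith [sq_nonneg (a i - m * p i)]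
      linarith
    · have hp0 : p i = 0 := le_antisymm (not_lt.mp h) (hp i)
      rw [h0 i hp0, hp0]; ring
  · intro h
    have hz0 : ∀ i ∈ Finset.univ, g i = 0 := by
      intro i _
      by_cases hpi : 0 < p i
      · have hz : a i - m * p i = 0 := by rw [h i]; ring
        simp [hg, hpi, hz]
      · simp [hg, hpi]
    have hz : ∑ i, g i = 0 := Finset.sum_eq_zero hz0
    rw [hgsum] at hz
    linarith

/-- No-loss condition: Bob's quantum Fisher information equals Alice's if and
only if `Im⟨ψ, P_i ψ'⟩ = p_i · Im⟨ψ, ψ'⟩` for every `i`. -/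
theorem qrf_no_loss_iff
    {H : Type*} [NormedAddCommGroup H] [InnerProductSpace ℂ H] [FiniteDimensional ℂ H]
    {ι : Type*} [Fintype ι]
    (ψ ψ' : H) (hψ : ‖ψ‖ = 1)
    (hre : ((inner ℂ ψ ψ' : ℂ)).re = 0)
    (P : ι → H →L[ℂ] H)
    (hsa : ∀ i, IsSelfAdjoint (P i))
    (hidem : ∀ i, P i * P i = P i)
    (horth : ∀ i j, i ≠ j → P i * P j = 0)
    (hsum : ∑ i, P i = 1) :
    (4 * ‖ψ'‖ ^ 2
        - 4 * ∑ i, (if 0 < ((inner ℂ ψ (P i ψ) : ℂ)).re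
            then ((inner ℂ ψ (P i ψ') : ℂ)).im ^ 2 / ((inner ℂ ψ (P i ψ) : ℂ)).re else 0)
      = 4 * (‖ψ'‖ ^ 2 - ‖(inner ℂ ψ ψ' : ℂ)‖ ^ 2))
    ↔ ∀ i, ((inner ℂ ψ (P i ψ') : ℂ)).im
        = ((inner ℂ ψ (P i ψ) : ℂ)).re * ((inner ℂ ψ ψ' : ℂ)).im := by
  have hsym : ∀ i (x y : H), (inner ℂ ((P i) x) y : ℂ) = inner ℂ x ((P i) y) :=
    fun i x y => (hsa i).isSymmetric x y
  have hself : ∀ i, (inner ℂ ψ (P i ψ) : ℂ) = inner ℂ (P i ψ) (P i ψ) := by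
    intro i
    conv_lhs => rw [← hidem i]
    rw [ContinuousLinearMap.mul_apply, ← hsym i]
  set p : ι → ℝ := fun i => ((inner ℂ ψ (P i ψ) : ℂ)).re with hpdef
  set a : ι → ℝ := fun i => ((inner ℂ ψ (P i ψ') : ℂ)).im with hadef
  set m : ℝ := ((inner ℂ ψ ψ' : ℂ)).im with hmdef
  have hpnorm : ∀ i, p i = ‖(P i) ψ‖ ^ 2 := by
    intro i
    show ((inner ℂ ψ (P i ψ) : ℂ)).re = _
    rw [hself i, inner_self_eq_norm_sq_to_K]
    norm_cast
  have hpnn : ∀ i, 0 ≤ p i := by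
    intro i
    rw [hpnorm i]
    positivity
  have hp0 : ∀ i, p i = 0 → a i = 0 := by
    intro i h
    have hz : (P i) ψ = 0 := by
      have h2 : ‖(P i) ψ‖ ^ 2 = 0 := by rw [← hpnorm i]; exact h
      have h3 := (pow_eq_zero_iff (n := 2) (by norm_num)).mp h2
      exact norm_eq_zero.mp h3
    have h0 : (inner ℂ ψ (P i ψ') : ℂ) = 0 := by
      rw [← hsym i, hz, inner_zero_left]
    show ((inner ℂ ψ (P i ψ') : ℂ)).im = 0
    rw [h0]
    simp
  have hinnersum : ∀ (x : H), ∑ i, (inner ℂ ψ (P i x) : ℂ) = inner ℂ ψ x := by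
    intro x
    rw [← inner_sum]
    congr 1
    have hx : ∑ i, P i x = (∑ i, P i) x := by
      simp [ContinuousLinearMap.sum_apply]
    rw [hx, hsum]
    rfl
  have hps : ∑ i, p i = 1 := by
    have h1 := congrArg Complex.re (hinnersum ψ)
    rw [Complex.re_sum] at h1
    show ∑ i, ((inner ℂ ψ (P i ψ) : ℂ)).re = 1
    rw [h1, inner_self_eq_norm_sq_to_K ψ, hψ]
    norm_num
  have has : ∑ i, a i = m := by
    have h1 := congrArg Complex.im (hinnersum ψ')
    rw [Complex.im_sum] at h1
    exact h1
  have hnorm : ‖(inner ℂ ψ ψ' : ℂ)‖ ^ 2 = m ^ 2 := by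
    rw [Complex.sq_norm, Complex.normSq_apply, hre]
    ring
  have key := qrf_key p a m hpnn hp0 hps has
  constructor
  · intro h i
    have hS : (∑ i, if 0 < p i then (a i) ^ 2 / p i else 0) = m ^ 2 := by
      rw [hnorm] at h; linarith
    have hi := key.mp hS i
    show a i = p i * m
    exact hi
  · intro h
    have hS : (∑ i, if 0 < p i then (a i) ^ 2 / p i else 0) = m ^ 2 :=
      key.mpr fun i => h i
    rw [hnorm]
    linarith
end

section
/- Maximum-loss condition (Theorem on precision loss, equality case H_B = 0): Let H be a finite-dimensional complex inner product space, ψ ∈ H a unit vector, ψ' ∈ H, and (P_i)_{i∈ι} a finite family of self-adjoint idempotent operators on H with P_i P_j = 0 for i ≠ j and ∑_i P_i = id; set p_i := ⟨ψ, P_i ψ⟩. Then Bob's quantum Fisher information H_B := 4‖ψ'‖² − 4 ∑_{i : p_i > 0} (Im⟨ψ, P_i ψ'⟩)² / p_i vanishes if and only if for every i, Re⟨ψ, P_i ψ'⟩ = 0 and there exists c_i ∈ ℂ with P_i ψ' = c_i · P_i ψ (the latter condition is equivalent to the paper's requirement that ψ' be orthogonal to every vector φ_j completing the family {P_i ψ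 / √p_i} to an orthonormal basis). -/
private lemma qrf_inner_re_self {H : Type*} [NormedAddCommGroup H] [InnerProductSpace ℂ H]
    (a : H) : ((inner ℂ a a : ℂ)).re = ‖a‖ ^ 2 := by
  have := inner_self_eq_norm_sq (𝕜 := ℂ) a
  simpa using this

private lemma qrf_aux_nonneg {H : Type*} [NormedAddCommGroup H] [InnerProductSpace ℂ H]
    (a b : H) :
    0 ≤ ‖b‖ ^ 2 - (if 0 < ((inner ℂ a a : ℂ)).re
        then ((inner ℂ a b : ℂ)).im ^ 2 / ((inner ℂ a a : ℂ)).re else 0) := by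
  split_ifs with h
  · rw [qrf_inner_re_self] at h ⊢
    have hcs : ‖(inner ℂ a b : ℂ)‖ ≤ ‖a‖ * ‖b‖ := norm_inner_le_norm a b
    have him : ((inner ℂ a b : ℂ)).im ^ 2 ≤ ‖(inner ℂ a b : ℂ)‖ ^ 2 := by
      rw [Complex.sq_norm, Complex.normSq_apply]
      nlinarith [sq_nonneg ((inner ℂ a b : ℂ)).re]
    have h2 : ((inner ℂ a b : ℂ)).im ^ 2 ≤ ‖a‖ ^ 2 * ‖b‖ ^ 2 := by
      nlinarith [norm_nonneg (inner ℂ a b : ℂ), norm_nonneg a, norm_nonneg b]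
    rw [sub_nonneg, div_le_iff₀ h]
    nlinarith
  · simp [sq_nonneg]

private lemma qrf_aux {H : Type*} [NormedAddCommGroup H] [InnerProductSpace ℂ H]
    (a b : H) :
    (‖b‖ ^ 2 - (if 0 < ((inner ℂ a a : ℂ)).re
        then ((inner ℂ a b : ℂ)).im ^ 2 / ((inner ℂ a a : ℂ)).re else 0) = 0)
    ↔ ((inner ℂ a b : ℂ)).re = 0 ∧ ∃ c : ℂ, b = c • a := by
  by_cases ha : a = 0
  · subst ha
    have h0 : (inner ℂ (0 : H) b : ℂ) = 0 := inner_zero_left b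
    have h0' : (inner ℂ (0 : H) (0 : H) : ℂ) = 0 := inner_zero_left 0
    rw [h0, h0']
    simp only [Complex.zero_re, Complex.zero_im, lt_irrefl, if_false, sub_zero, smul_zero]
    constructor
    · intro h
      refine ⟨trivial, 0, ?_⟩
      have : ‖b‖ = 0 := by nlinarith [norm_nonneg b]
      simpa using norm_eq_zero.mp this
    · rintro ⟨-, c, rfl⟩
      simp
  · have hna : 0 < ‖a‖ := norm_pos_iff.mpr ha
    have hpos : 0 < ((inner ℂ a a : ℂ)).re := by rw [qrf_inner_re_self]; positivity
    rw [if_pos hpos, qrf_inner_re_self]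
    have hane : (‖a‖ : ℝ) ^ 2 ≠ 0 := by positivity
    rw [sub_eq_zero, eq_div_iff hane]
    constructor
    · intro h
      have hcs : ‖(inner ℂ a b : ℂ)‖ ≤ ‖a‖ * ‖b‖ := norm_inner_le_norm a b
      have habs : ‖(inner ℂ a b : ℂ)‖ ^ 2 = ((inner ℂ a b : ℂ)).re ^ 2 + ((inner ℂ a b : ℂ)).im ^ 2 := by
        rw [Complex.sq_norm, Complex.normSq_apply]; ring
      have hre : ((inner ℂ a b : ℂ)).re = 0 := by
        nlinarith [sq_nonneg ((inner ℂ a b : ℂ)).re, norm_nonneg (inner ℂ a b : ℂ),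
          norm_nonneg a, norm_nonneg b]
      refine ⟨hre, ?_⟩
      by_cases hb : b = 0
      · exact ⟨0, by simp [hb]⟩
      · have heq : ‖(inner ℂ a b : ℂ)‖ = ‖a‖ * ‖b‖ := by
          have h1 : ‖(inner ℂ a b : ℂ)‖ ^ 2 = (‖a‖ * ‖b‖) ^ 2 := by
            rw [habs, hre]; nlinarith
          have := norm_nonneg (inner ℂ a b : ℂ)
          nlinarith [norm_nonneg a, norm_nonneg b]
        obtain ⟨r, _, hr⟩ := (norm_inner_eq_norm_iff ha hb).mp heq
        exact ⟨r, hr⟩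
    · rintro ⟨hre, c, rfl⟩
      have hinner : (inner ℂ a (c • a) : ℂ) = c * ((‖a‖ : ℂ) ^ 2) := by
        rw [inner_smul_right, inner_self_eq_norm_sq_to_K]
        norm_num
      have hre' : ((inner ℂ a (c • a) : ℂ)).re = c.re * ‖a‖ ^ 2 := by
        rw [hinner]; simp [Complex.mul_re, ← Complex.ofReal_pow]
      have him' : ((inner ℂ a (c • a) : ℂ)).im = c.im * ‖a‖ ^ 2 := by
        rw [hinner]; simp [Complex.mul_im, ← Complex.ofReal_pow]
      have hcre : c.re = 0 := by
        rw [hre'] at hre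
        rcases mul_eq_zero.mp hre with h | h
        · exact h
        · exact absurd h hane
      have hnb : ‖c • a‖ ^ 2 = (c.re ^ 2 + c.im ^ 2) * ‖a‖ ^ 2 := by
        rw [norm_smul]
        have : ‖c‖ ^ 2 = c.re ^ 2 + c.im ^ 2 := by
          rw [Complex.sq_norm, Complex.normSq_apply]; ring
        rw [mul_pow, this]
      rw [him', hnb, hcre]
      ring

/-- Maximum-loss condition: Bob's quantum Fisher information vanishes if and
only if `Re⟨ψ, P_i ψ'⟩ = 0` and `P_i ψ'` is a multiple of `P_i ψ` for every `i`. -/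
theorem qrf_max_loss_iff
    {H : Type*} [NormedAddCommGroup H] [InnerProductSpace ℂ H] [FiniteDimensional ℂ H]
    {ι : Type*} [Fintype ι]
    (ψ ψ' : H) (hψ : ‖ψ‖ = 1)
    (P : ι → H →L[ℂ] H)
    (hsa : ∀ i, IsSelfAdjoint (P i))
    (hidem : ∀ i, P i * P i = P i)
    (horth : ∀ i j, i ≠ j → P i * P j = 0)
    (hsum : ∑ i, P i = 1) :
    (4 * ‖ψ'‖ ^ 2
        - 4 * ∑ i, (if 0 < ((inner ℂ ψ (P i ψ) : ℂ)).re
            then ((inner ℂ ψ (P i ψ') : ℂ)).im ^ 2 / ((inner ℂ ψ (P i ψ) : ℂ)).re else 0)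
      = 0)
    ↔ ∀ i, ((inner ℂ ψ (P i ψ') : ℂ)).re = 0 ∧ ∃ c : ℂ, P i ψ' = c • P i ψ := by
  -- key: ⟨ψ, P i x⟩ = ⟨P i ψ, P i x⟩
  have key : ∀ (i : ι) (x y : H), (inner ℂ x (P i y) : ℂ) = inner ℂ (P i x) (P i y) := by
    intro i x y
    conv_lhs => rw [← hidem i]
    rw [ContinuousLinearMap.mul_apply, ← ContinuousLinearMap.adjoint_inner_left,
      (hsa i).adjoint_eq]
  -- decomposition of ψ'
  have hsplit : ∑ i, P i ψ' = ψ' := by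
    have := congrArg (fun (A : H →L[ℂ] H) => A ψ') hsum
    simpa [ContinuousLinearMap.sum_apply] using this
  have hnorm : ‖ψ'‖ ^ 2 = ∑ i, ‖P i ψ'‖ ^ 2 := by
    have h1 : (inner ℂ ψ' ψ' : ℂ) = ∑ i, (inner ℂ (P i ψ') (P i ψ') : ℂ) := by
      calc (inner ℂ ψ' ψ' : ℂ) = inner ℂ ψ' (∑ i, P i ψ') := by rw [hsplit]
        _ = ∑ i, (inner ℂ ψ' (P i ψ') : ℂ) := inner_sum _ _ _
        _ = ∑ i, (inner ℂ (P i ψ') (P i ψ') : ℂ) := Finset.sum_congr rfl fun i _ => key i ψ' ψ'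
    have h2 := congrArg Complex.re h1
    rw [qrf_inner_re_self, Complex.re_sum] at h2
    rw [h2]
    exact Finset.sum_congr rfl fun i _ => qrf_inner_re_self _
  -- rewrite the whole expression as 4 * sum of nonneg terms
  have hmain : 4 * ‖ψ'‖ ^ 2
        - 4 * ∑ i, (if 0 < ((inner ℂ ψ (P i ψ) : ℂ)).re
            then ((inner ℂ ψ (P i ψ') : ℂ)).im ^ 2 / ((inner ℂ ψ (P i ψ) : ℂ)).re else 0)
      = 4 * ∑ i, (‖P i ψ'‖ ^ 2 - (if 0 < ((inner ℂ (P i ψ) (P i ψ) : ℂ)).re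
            then ((inner ℂ (P i ψ) (P i ψ') : ℂ)).im ^ 2 / ((inner ℂ (P i ψ) (P i ψ) : ℂ)).re
            else 0)) := by
    rw [Finset.sum_sub_distrib, hnorm, mul_sub]
    congr 2
    exact Finset.sum_congr rfl fun i _ => by rw [key i ψ ψ, key i ψ ψ']
  rw [hmain]
  rw [mul_eq_zero]
  have h4 : (4 : ℝ) ≠ 0 := by norm_num
  constructor
  · intro h i
    rcases h with h | h
    · exact absurd h h4
    · have := (Finset.sum_eq_zero_iff_of_nonneg
        (fun i _ => qrf_aux_nonneg (P i ψ) (P i ψ'))).mp h i (Finset.mem_univ i)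
      have := (qrf_aux (P i ψ) (P i ψ')).mp this
      exact ⟨by rw [key i ψ ψ']; exact this.1, this.2⟩
  · intro h
    right
    refine (Finset.sum_eq_zero_iff_of_nonneg
      (fun i _ => qrf_aux_nonneg (P i ψ) (P i ψ'))).mpr fun i _ => ?_
    refine (qrf_aux (P i ψ) (P i ψ')).mpr ⟨?_, (h i).2⟩
    rw [← key i ψ ψ']
    exact (h i).1
end

section
/- No-loss condition under unitary encoding: Let H be a finite-dimensional complex inner product space, ψ ∈ H a unit vector, K a self-adjoint operator on H, and (P_i)_{i∈ι} a finite family of self-adjoint idempotent operators on H with P_i P_j = 0 for i ≠ j and ∑_i P_i = id; set p_i := ⟨ψ, P_i ψ⟩. Then Bob's quantum Fisher information H_B(K) := 4‖Kψ‖² − 4 ∑_{i : p_i > 0} (Re⟨ψ, P_i K ψ⟩)² / p_i equals Alice's quantum Fisher information 4 Var_ψ(K) := 4(⟨ψ, K²ψ⟩ − ⟨ψ, Kψ⟩²) if and only if Cov_ψ(P_i, K) = 0 for every i, where Cov_ψ(P_i, K) := ½⟨ψ, (P_i K + K P_i)ψ⟩ − p_i ⟨ψ, Kψ⟩. -/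
open scoped InnerProductSpace

private lemma qrf_aux_s9 {ι : Type*} [Fintype ι] (p a : ι → ℝ) (k : ℝ)
    (hpnn : ∀ i, 0 ≤ p i) (hp0 : ∀ i, p i = 0 → a i = 0)
    (hsp : ∑ i, p i = 1) (hsA : ∑ i, a i = k) :
    (∑ i, if 0 < p i then a i ^ 2 / p i else 0) = k ^ 2 ↔
      ∀ i, a i - p i * k = 0 := by
  have hpz : ∀ i, ¬ 0 < p i → p i = 0 := fun i h => le_antisymm (not_lt.mp h) (hpnn i)
  have hpoint : ∀ i, (if 0 < p i then (a i - k * p i) ^ 2 / p i else 0)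
      = (if 0 < p i then a i ^ 2 / p i else 0) - 2 * k * a i + k ^ 2 * p i := by
    intro i
    by_cases h : 0 < p i
    · simp only [if_pos h]
      field_simp
      ring
    · have h0 := hpz i h
      simp [if_neg h, h0, hp0 i h0]
  have hS : (∑ i, if 0 < p i then (a i - k * p i) ^ 2 / p i else 0)
      = (∑ i, if 0 < p i then a i ^ 2 / p i else 0) - k ^ 2 := by
    rw [Finset.sum_congr rfl (fun i _ => hpoint i), Finset.sum_add_distrib,
      Finset.sum_sub_distrib, ← Finset.mul_sum, ← Finset.mul_sum, hsA, hsp]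
    ring
  constructor
  · intro h
    have hzero : (∑ i, if 0 < p i then (a i - k * p i) ^ 2 / p i else 0) = 0 := by
      rw [hS, h]; ring
    have hterm := (Finset.sum_eq_zero_iff_of_nonneg (fun i _ => by
      by_cases hpi : 0 < p i
      · simp only [if_pos hpi]; positivity
      · simp [if_neg hpi])).mp hzero
    intro i
    have hi := hterm i (Finset.mem_univ i)
    by_cases hpi : 0 < p i
    · rw [if_pos hpi] at hi
      rcases div_eq_zero_iff.mp hi with h1 | h1
      · have h2 : a i - k * p i = 0 := by
          have := pow_eq_zero_iff (n := 2) (by norm_num) |>.mp h1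
          exact this
        linear_combination h2
      · exact absurd h1 (ne_of_gt hpi)
    · have h0 := hpz i hpi
      rw [h0, hp0 i h0]; ring
  · intro h
    have hz : (∑ i, if 0 < p i then (a i - k * p i) ^ 2 / p i else 0) = 0 := by
      apply Finset.sum_eq_zero
      intro i _
      by_cases hpi : 0 < p i
      · rw [if_pos hpi]
        have h2 : a i - k * p i = 0 := by linear_combination h i
        rw [h2]; simp
      · simp [if_neg hpi]
    rw [hS] at hz
    linarith

/-- No-loss condition under unitary encoding: Bob's quantum Fisher information
equals `4 Var_ψ(K)` if and only if `Cov_ψ(P_i, K) = 0` for every `i`. -/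
theorem qrf_no_loss_unitary_iff
    {H : Type*} [NormedAddCommGroup H] [InnerProductSpace ℂ H] [FiniteDimensional ℂ H]
    {ι : Type*} [Fintype ι]
    (ψ : H) (hψ : ‖ψ‖ = 1)
    (K : H →L[ℂ] H) (hK : IsSelfAdjoint K)
    (P : ι → H →L[ℂ] H)
    (hsa : ∀ i, IsSelfAdjoint (P i))
    (hidem : ∀ i, P i * P i = P i)
    (horth : ∀ i j, i ≠ j → P i * P j = 0)
    (hsum : ∑ i, P i = 1) :
    (4 * ‖K ψ‖ ^ 2
        - 4 * ∑ i, (if 0 < ((inner ℂ ψ (P i ψ) : ℂ)).re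
            then ((inner ℂ ψ (P i (K ψ)) : ℂ)).re ^ 2 / ((inner ℂ ψ (P i ψ) : ℂ)).re else 0)
      = 4 * (((inner ℂ ψ (K (K ψ)) : ℂ)).re - (((inner ℂ ψ (K ψ) : ℂ)).re) ^ 2))
    ↔ ∀ i, ((inner ℂ ψ (P i (K ψ)) : ℂ) + (inner ℂ ψ (K (P i ψ)) : ℂ)).re / 2
        - ((inner ℂ ψ (P i ψ) : ℂ)).re * ((inner ℂ ψ (K ψ) : ℂ)).re = 0 := by
  have hsymK : ∀ x y : H, (inner ℂ (K x) y : ℂ) = inner ℂ x (K y) := fun x y => hK.isSymmetric x y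
  have hsymP : ∀ i, ∀ x y : H, (inner ℂ (P i x) y : ℂ) = inner ℂ x (P i y) :=
    fun i x y => (hsa i).isSymmetric x y
  -- p i = ‖P i ψ‖ ^ 2
  have hpip : ∀ i, (inner ℂ ψ (P i ψ) : ℂ) = inner ℂ (P i ψ) (P i ψ) := by
    intro i
    conv_lhs => rw [← hidem i]
    rw [ContinuousLinearMap.mul_apply, ← hsymP i]
  have hpnorm : ∀ i, ((inner ℂ ψ (P i ψ) : ℂ)).re = ‖P i ψ‖ ^ 2 := by
    intro i
    rw [hpip i, inner_self_eq_norm_sq_to_K]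
    norm_cast
  have hpnn : ∀ i, 0 ≤ ((inner ℂ ψ (P i ψ) : ℂ)).re := fun i => by rw [hpnorm i]; positivity
  -- if p i = 0 then a i = 0
  have hpa : ∀ i, (inner ℂ ψ (P i (K ψ)) : ℂ) = inner ℂ (P i ψ) (K ψ) :=
    fun i => (hsymP i ψ (K ψ)).symm
  have hp0 : ∀ i, ((inner ℂ ψ (P i ψ) : ℂ)).re = 0 → ((inner ℂ ψ (P i (K ψ)) : ℂ)).re = 0 := by
    intro i h
    have h1 : ‖P i ψ‖ ^ 2 = 0 := by rw [← hpnorm i]; exact h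
    have h2 : P i ψ = 0 := by
      have := pow_eq_zero_iff (n := 2) (by norm_num) |>.mp h1
      simpa using this
    rw [hpa i, h2, inner_zero_left]
    simp
  -- sums
  have happ : ∀ x : H, (∑ i, (inner ℂ ψ (P i x) : ℂ)) = inner ℂ ψ x := by
    intro x
    rw [← inner_sum]
    congr 1
    rw [← ContinuousLinearMap.sum_apply, hsum, ContinuousLinearMap.one_apply]
  have hsump : (∑ i, ((inner ℂ ψ (P i ψ) : ℂ)).re) = 1 := by
    rw [← Complex.re_sum, happ ψ, inner_self_eq_norm_sq_to_K, hψ]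
    simp
  have hsuma : (∑ i, ((inner ℂ ψ (P i (K ψ)) : ℂ)).re) = ((inner ℂ ψ (K ψ) : ℂ)).re := by
    rw [← Complex.re_sum, happ (K ψ)]
  -- ‖K ψ‖ ^ 2
  have hKnorm : ‖K ψ‖ ^ 2 = ((inner ℂ ψ (K (K ψ)) : ℂ)).re := by
    rw [← hsymK ψ (K ψ), inner_self_eq_norm_sq_to_K]
    norm_cast
  -- re⟪ψ, K (P i ψ)⟫ = re⟪ψ, P i (K ψ)⟫
  have hKa : ∀ i, ((inner ℂ ψ (K (P i ψ)) : ℂ)).re = ((inner ℂ ψ (P i (K ψ)) : ℂ)).re := by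
    intro i
    rw [← hsymK ψ (P i ψ), ← inner_conj_symm, hsymP i, Complex.conj_re]
  have key := qrf_aux_s9 (fun i => ((inner ℂ ψ (P i ψ) : ℂ)).re)
    (fun i => ((inner ℂ ψ (P i (K ψ)) : ℂ)).re) (((inner ℂ ψ (K ψ) : ℂ)).re)
    hpnn hp0 hsump hsuma
  beta_reduce at key
  rw [hKnorm]
  constructor
  · intro hEq i
    have h1 : (∑ i, if 0 < ((inner ℂ ψ (P i ψ) : ℂ)).re
        then ((inner ℂ ψ (P i (K ψ)) : ℂ)).re ^ 2 / ((inner ℂ ψ (P i ψ) : ℂ)).re else 0)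
        = ((inner ℂ ψ (K ψ) : ℂ)).re ^ 2 := by linarith
    have h2 := key.mp h1 i
    rw [Complex.add_re, hKa i]
    linarith
  · intro hAll
    have h1 : ∀ i, ((inner ℂ ψ (P i (K ψ)) : ℂ)).re
        - ((inner ℂ ψ (P i ψ) : ℂ)).re * ((inner ℂ ψ (K ψ) : ℂ)).re = 0 := by
      intro i
      have := hAll i
      rw [Complex.add_re, hKa i] at this
      linarith
    have h2 := key.mpr h1
    linarith
end

section
/- Non-degenerate commuting noise destroys all information about the parameter: Let H be a finite-dimensional complex inner product space with orthonormal basis (e_i)_{i∈ι}, and let P_i be the orthogonal projection onto the line ℂ·e_i (so each P_i has rank 1, the P_i are pairwise orthogonal, and ∑_i P_i = id). Let K be a self-adjoint operator on H commuting with every P_i (equivalently, K commutes with a generator G having non-degenerate spectrum whose spectral projections are the P_i; equivalently, K e_i = k_i e_i with k_i ∈ ℝ). Then for every unit vector ψ ∈ H, Bob's quantum Fisher information vanishes: H_B(K) := 4‖Kψ‖² − 4 ∑_{i : p_i > 0} (Re⟨ψ, P_i K ψ⟩)² / p_i = 0, where p_i := ⟨ψ, P_i ψ⟩; i.e. the parameter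 ε of the encoding ψ_ε = e^{−iKε}ψ cannot be estimated after twirling. -/
private lemma conj_mul_re_aux (z : ℂ) : ((starRingEnd ℂ) z * z).re = ‖z‖ ^ 2 := by
  rw [mul_comm, Complex.mul_conj, Complex.ofReal_re, Complex.normSq_eq_norm_sq]

/-- Non-degenerate commuting noise destroys all information about the
parameter: if each `P_i` is the rank-one orthogonal projection onto the line
spanned by the orthonormal-basis vector `e i`, and the self-adjoint encoding
generator `K` commutes with every `P_i`, then Bob's quantum Fisher information
vanishes for every unit vector `ψ`. -/
theorem qrf_nondegenerate_commuting_noise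
    {H : Type*} [NormedAddCommGroup H] [InnerProductSpace ℂ H] [FiniteDimensional ℂ H]
    {ι : Type*} [Fintype ι]
    (e : OrthonormalBasis ι ℂ H)
    (P : ι → H →L[ℂ] H)
    (hP : ∀ i v, P i v = (inner ℂ (e i) v : ℂ) • e i)
    (K : H →L[ℂ] H) (hK : IsSelfAdjoint K)
    (hcomm : ∀ i, K * P i = P i * K) :
    ∀ ψ : H, ‖ψ‖ = 1 →
      4 * ‖K ψ‖ ^ 2
          - 4 * ∑ i, (if 0 < ((inner ℂ ψ (P i ψ) : ℂ)).re
              then ((inner ℂ ψ (P i (K ψ)) : ℂ)).re ^ 2 / ((inner ℂ ψ (P i ψ) : ℂ)).re else 0)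
        = 0 := by
  intro ψ hψ
  have hsym : (K : H →ₗ[ℂ] H).IsSymmetric := hK.isSymmetric
  have hPe : ∀ i, P i (e i) = e i := by
    intro i
    rw [hP, inner_self_eq_norm_sq_to_K, e.orthonormal.1 i]
    simp
  have hKe : ∀ i, K (e i) = (inner ℂ (e i) (K (e i)) : ℂ) • e i := by
    intro i
    conv_lhs => rw [← hPe i]
    have := congrArg (fun T : H →L[ℂ] H => T (e i)) (hcomm i)
    simp only [ContinuousLinearMap.mul_apply] at this
    rw [this, hP]
  set κ : ι → ℂ := fun i => inner ℂ (e i) (K (e i)) with hκ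
  have hκreal : ∀ i, (starRingEnd ℂ) (κ i) = κ i := by
    intro i
    rw [hκ]
    simp only
    rw [inner_conj_symm]
    exact hsym (e i) (e i)
  have hinner : ∀ i, (inner ℂ (e i) (K ψ) : ℂ) = κ i * inner ℂ (e i) ψ := by
    intro i
    have h1 : (inner ℂ (K (e i)) ψ : ℂ) = inner ℂ (e i) (K ψ) := hsym (e i) ψ
    rw [← h1, hKe i, inner_smul_left, hκreal i]
  have hp : ∀ i, ((inner ℂ ψ (P i ψ) : ℂ)).re = ‖(inner ℂ (e i) ψ : ℂ)‖ ^ 2 := by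
    intro i
    rw [hP, inner_smul_right, ← inner_conj_symm ψ (e i), mul_comm]
    exact conj_mul_re_aux _
  have hq : ∀ i, ((inner ℂ ψ (P i (K ψ)) : ℂ)).re = (κ i).re * ‖(inner ℂ (e i) ψ : ℂ)‖ ^ 2 := by
    intro i
    have hκre : ((κ i).re : ℂ) = κ i := Complex.conj_eq_iff_re.mp (hκreal i)
    rw [hP, inner_smul_right, hinner i, ← inner_conj_symm ψ (e i), ← hκre,
      mul_assoc, Complex.re_ofReal_mul, mul_comm ((inner ℂ (e i) ψ : ℂ)), conj_mul_re_aux,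
      Complex.ofReal_re]
  have hnorm : ‖K ψ‖ ^ 2 = ∑ i, (κ i).re ^ 2 * ‖(inner ℂ (e i) ψ : ℂ)‖ ^ 2 := by
    have h1 : ((inner ℂ (K ψ) (K ψ) : ℂ)).re = ‖K ψ‖ ^ 2 := by
      rw [inner_self_eq_norm_sq_to_K]
      norm_cast
    rw [← h1, ← e.sum_inner_mul_inner (K ψ) (K ψ), Complex.re_sum]
    refine Finset.sum_congr rfl fun i _ => ?_
    have h2 : (inner ℂ (K ψ) (e i) : ℂ) = (starRingEnd ℂ) (inner ℂ (e i) (K ψ) : ℂ) :=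
      (inner_conj_symm (K ψ) (e i)).symm
    have hκre : ((κ i).re : ℂ) = κ i := Complex.conj_eq_iff_re.mp (hκreal i)
    rw [h2, conj_mul_re_aux, hinner i, norm_mul, mul_pow, ← hκre]
    simp [Complex.norm_real, sq_abs]
  rw [hnorm, ← mul_sub, ← Finset.sum_sub_distrib, Finset.sum_eq_zero, mul_zero]
  intro i _
  rw [hp, hq]
  by_cases h : (0:ℝ) < ‖(inner ℂ (e i) ψ : ℂ)‖ ^ 2
  · rw [if_pos h, mul_pow, mul_div_assoc, pow_two (‖(inner ℂ (e i) ψ : ℂ)‖ ^ 2),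
      mul_div_assoc, div_self (ne_of_gt h)]
    ring
  · rw [if_neg h]
    have h0 : ‖(inner ℂ (e i) ψ : ℂ)‖ ^ 2 = 0 := le_antisymm (not_lt.mp h) (by positivity)
    rw [h0]; ring
end

section
/- Vanishing covariance of the encoding and noise generators is necessary for no loss of precision: Let H be a finite-dimensional complex inner product space, ψ ∈ H a unit vector, K a self-adjoint operator on H, (P_i)_{i∈ι} a finite family of self-adjoint idempotent operators on H with P_i P_j = 0 for i ≠ j and ∑_i P_i = id, and let G := ∑_i g_i P_i with g_i ∈ ℝ (a self-adjoint noise generator with spectral projections P_i); set p_i := ⟨ψ, P_i ψ⟩. If Bob's quantum Fisher information equals Alice's, i.e. 4‖Kψ‖² − 4 ∑_{i : p_i > 0} (Re⟨ψ, P_i K ψ⟩)² / p_i = 4(⟨ψ, K²ψ⟩ − ⟨ψ, Kψ⟩²), then Cov_ψ(G, K) := ½⟨ψ, (GK + KG)ψ⟩ − ⟨ψ, Gψ⟩⟨ψ, Kψ⟩ = 0. -/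
/-- Vanishing covariance of the encoding generator `K` and the noise generator
`G = ∑ᵢ gᵢ Pᵢ` is a necessary condition for no loss of precision: if Bob's
quantum Fisher information equals Alice's, then `Cov_ψ(G, K) = 0`. -/
theorem qrf_no_loss_implies_cov_zero
    {H : Type*} [NormedAddCommGroup H] [InnerProductSpace ℂ H] [FiniteDimensional ℂ H]
    {ι : Type*} [Fintype ι]
    (ψ : H) (hψ : ‖ψ‖ = 1)
    (K : H →L[ℂ] H) (hK : IsSelfAdjoint K)
    (P : ι → H →L[ℂ] H)
    (hsa : ∀ i, IsSelfAdjoint (P i))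
    (hidem : ∀ i, P i * P i = P i)
    (horth : ∀ i j, i ≠ j → P i * P j = 0)
    (hsum : ∑ i, P i = 1)
    (g : ι → ℝ) (G : H →L[ℂ] H)
    (hG : G = ∑ i, (g i : ℂ) • P i)
    (hnoloss : 4 * ‖K ψ‖ ^ 2
        - 4 * ∑ i, (if 0 < ((inner ℂ ψ (P i ψ) : ℂ)).re
            then ((inner ℂ ψ (P i (K ψ)) : ℂ)).re ^ 2 / ((inner ℂ ψ (P i ψ) : ℂ)).re else 0)
      = 4 * (((inner ℂ ψ (K (K ψ)) : ℂ)).re - (((inner ℂ ψ (K ψ) : ℂ)).re) ^ 2)) :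
    ((inner ℂ ψ (G (K ψ)) : ℂ) + (inner ℂ ψ (K (G ψ)) : ℂ)).re / 2
      - ((inner ℂ ψ (G ψ) : ℂ)).re * ((inner ℂ ψ (K ψ) : ℂ)).re = 0 := by
  -- adjoint moves
  have hKadj : ∀ x y : H, (inner ℂ (K x) y : ℂ) = inner ℂ x (K y) := fun x y => by
    conv_lhs => rw [← ContinuousLinearMap.isSelfAdjoint_iff'.mp hK]
    exact ContinuousLinearMap.adjoint_inner_left K y x
  have hPadj : ∀ i, ∀ x y : H, (inner ℂ ((P i) x) y : ℂ) = inner ℂ x ((P i) y) := fun i x y => by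
    conv_lhs => rw [← ContinuousLinearMap.isSelfAdjoint_iff'.mp (hsa i)]
    exact ContinuousLinearMap.adjoint_inner_left (P i) y x
  set p : ι → ℝ := fun i => ((inner ℂ ψ (P i ψ) : ℂ)).re with hp_def
  set a : ι → ℝ := fun i => ((inner ℂ ψ (P i (K ψ)) : ℂ)).re with ha_def
  set k : ℝ := ((inner ℂ ψ (K ψ) : ℂ)).re with hk_def
  -- inner ℂ ψ (P i ψ) = ⟪P i ψ, P i ψ⟫
  have hpinner : ∀ i, (inner ℂ ψ (P i ψ) : ℂ) = inner ℂ (P i ψ) (P i ψ) := by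
    intro i
    have h1 : P i (P i ψ) = P i ψ := by
      have := congrArg (fun T : H →L[ℂ] H => T ψ) (hidem i)
      simpa [ContinuousLinearMap.mul_apply] using this
    rw [hPadj i ψ (P i ψ), h1]
  have hpnorm : ∀ i, p i = ‖P i ψ‖ ^ 2 := by
    intro i
    rw [hp_def]
    simp only [hpinner i]
    simpa using inner_self_eq_norm_sq (𝕜 := ℂ) (P i ψ)
  have hpnonneg : ∀ i, 0 ≤ p i := fun i => (hpnorm i) ▸ sq_nonneg _
  -- sum of p is 1
  have hsum_p : ∑ i, p i = 1 := by
    have h1 : (∑ i, (inner ℂ ψ (P i ψ) : ℂ)) = inner ℂ ψ ψ := by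
      rw [← inner_sum]
      congr 1
      have := congrArg (fun T : H →L[ℂ] H => T ψ) hsum
      simpa [ContinuousLinearMap.sum_apply] using this
    have h2 : (inner ℂ ψ ψ : ℂ).re = 1 := by
      have : (inner ℂ ψ ψ : ℂ).re = ‖ψ‖ ^ 2 := by
        simpa using inner_self_eq_norm_sq (𝕜 := ℂ) ψ
      rw [this, hψ]; norm_num
    calc ∑ i, p i = (∑ i, (inner ℂ ψ (P i ψ) : ℂ)).re := by
          rw [Complex.re_sum]
      _ = 1 := by rw [h1, h2]
  -- when p i = 0, a i = 0
  have ha0 : ∀ i, p i = 0 → a i = 0 := by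
    intro i hpi
    have hP0 : P i ψ = 0 := by
      have : ‖P i ψ‖ ^ 2 = 0 := by rw [← hpnorm i]; exact hpi
      simpa using pow_eq_zero_iff (n := 2) (by norm_num) |>.mp this
    have : (inner ℂ ψ (P i (K ψ)) : ℂ) = 0 := by
      rw [← hPadj i ψ (K ψ), hP0, inner_zero_left]
    simp [ha_def, this]
  -- sum of a is k
  have hsum_a : ∑ i, a i = k := by
    have h1 : (∑ i, (inner ℂ ψ (P i (K ψ)) : ℂ)) = inner ℂ ψ (K ψ) := by
      rw [← inner_sum]
      congr 1
      have := congrArg (fun T : H →L[ℂ] H => T (K ψ)) hsum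
      simpa [ContinuousLinearMap.sum_apply] using this
    calc ∑ i, a i = (∑ i, (inner ℂ ψ (P i (K ψ)) : ℂ)).re := by rw [Complex.re_sum]
      _ = k := by rw [h1]
  -- ⟨ψ, K(Kψ)⟩.re = ‖Kψ‖²
  have hK2 : ((inner ℂ ψ (K (K ψ)) : ℂ)).re = ‖K ψ‖ ^ 2 := by
    rw [← hKadj ψ (K ψ)]
    simpa using inner_self_eq_norm_sq (𝕜 := ℂ) (K ψ)
  -- the hypothesis becomes S = k²
  have hS : ∑ i, (if 0 < p i then a i ^ 2 / p i else 0) = k ^ 2 := by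
    rw [hK2] at hnoloss
    have := hnoloss
    linarith
  -- key: a i = k * p i for all i
  have hkey : ∀ i, a i = k * p i := by
    have hT : ∑ i, (if 0 < p i then (a i - k * p i) ^ 2 / p i else 0) = 0 := by
      have hterm : ∀ i, (if 0 < p i then (a i - k * p i) ^ 2 / p i else 0)
          = (if 0 < p i then a i ^ 2 / p i else 0) - 2 * k * a i + k ^ 2 * p i := by
        intro i
        by_cases h : 0 < p i
        · simp only [if_pos h]
          field_simp
          ring
        · have hp0 : p i = 0 := le_antisymm (not_lt.mp h) (hpnonneg i)
          simp [if_neg h, hp0, ha0 i hp0]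
      rw [Finset.sum_congr rfl (fun i _ => hterm i)]
      rw [Finset.sum_add_distrib, Finset.sum_sub_distrib, ← Finset.mul_sum, ← Finset.mul_sum,
        hsum_a, hsum_p, hS]
      ring
    have hnn : ∀ i ∈ Finset.univ, 0 ≤ (if 0 < p i then (a i - k * p i) ^ 2 / p i else 0) := by
      intro i _
      by_cases h : 0 < p i
      · simp only [if_pos h]; positivity
      · simp [if_neg h]
    have hzero := (Finset.sum_eq_zero_iff_of_nonneg hnn).mp hT
    intro i
    by_cases h : 0 < p i
    · have := hzero i (Finset.mem_univ i)
      rw [if_pos h] at this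
      have h2 : (a i - k * p i) ^ 2 = 0 := by
        rcases div_eq_zero_iff.mp this with h' | h'
        · exact h'
        · exact absurd h' (ne_of_gt h)
      have := pow_eq_zero_iff (n := 2) (by norm_num) |>.mp h2
      linarith
    · have hp0 : p i = 0 := le_antisymm (not_lt.mp h) (hpnonneg i)
      rw [ha0 i hp0, hp0]; ring
  -- compute the covariance pieces
  have hGK : ((inner ℂ ψ (G (K ψ)) : ℂ)).re = ∑ i, g i * a i := by
    rw [hG]
    have : ((∑ i, (g i : ℂ) • P i) (K ψ)) = ∑ i, (g i : ℂ) • (P i (K ψ)) := by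
      simp [ContinuousLinearMap.sum_apply]
    rw [this, inner_sum, Complex.re_sum]
    refine Finset.sum_congr rfl fun i _ => ?_
    rw [inner_smul_right]
    exact Complex.re_ofReal_mul _ _
  have hGψ : ((inner ℂ ψ (G ψ) : ℂ)).re = ∑ i, g i * p i := by
    rw [hG]
    have : ((∑ i, (g i : ℂ) • P i) ψ) = ∑ i, (g i : ℂ) • (P i ψ) := by
      simp [ContinuousLinearMap.sum_apply]
    rw [this, inner_sum, Complex.re_sum]
    refine Finset.sum_congr rfl fun i _ => ?_
    rw [inner_smul_right]
    exact Complex.re_ofReal_mul _ _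
  have hKG : ((inner ℂ ψ (K (G ψ)) : ℂ)).re = ∑ i, g i * a i := by
    rw [← hKadj ψ (G ψ), hG]
    have : ((∑ i, (g i : ℂ) • P i) ψ) = ∑ i, (g i : ℂ) • (P i ψ) := by
      simp [ContinuousLinearMap.sum_apply]
    rw [this, inner_sum, Complex.re_sum]
    refine Finset.sum_congr rfl fun i _ => ?_
    rw [inner_smul_right, Complex.re_ofReal_mul]
    congr 1
    have h1 : (inner ℂ (K ψ) (P i ψ) : ℂ) = starRingEnd ℂ (inner ℂ ψ (P i (K ψ))) := by
      rw [← hPadj i ψ (K ψ)]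
      exact (inner_conj_symm (K ψ) (P i ψ)).symm
    rw [h1, Complex.conj_re]
  have hga : ∑ i, g i * a i = k * ∑ i, g i * p i := by
    rw [Finset.mul_sum]
    exact Finset.sum_congr rfl fun i _ => by rw [hkey i]; ring
  rw [Complex.add_re, hGK, hKG, hGψ, hga]
  ring
end

section
/- Symmetric logarithmic derivative of the twirled pure state: Let H be a finite-dimensional complex inner product space, ψ ∈ H a unit vector, ψ' ∈ H, and (P_i)_{i∈ι} a finite family of self-adjoint idempotent operators on H with P_i P_j = 0 for i ≠ j and ∑_i P_i = id; set p_i := ⟨ψ, P_i ψ⟩. Define ρ_B := ∑_i P_i |ψ⟩⟨ψ| P_i, and for each i with p_i > 0 set ψ_i := P_i ψ / √p_i and φ_i := (2 P_i ψ' − ⟨ψ_i, ψ'⟩ ψ_i) / √p_i, and define L := ∑_{i : p_i > 0} (|φ_i⟩⟨ψ_i| + |ψ_i⟩⟨φ_i|). Then L solves the symmetric-logarithmic-derivative equation for the twirled family: ½(L ρ_B + ρ_B L) = ∑_i P_i (|ψ'⟩⟨ψ| + |ψ⟩⟨ψ'|) P_i. -/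
/-- The operator `L = ∑_{i : p_i > 0} (|φ_i⟩⟨ψ_i| + |ψ_i⟩⟨φ_i|)`, with
`ψ_i = P_i ψ / √p_i` and `φ_i = (2 P_i ψ' − ⟨ψ_i, ψ'⟩ ψ_i)/√p_i`, solves the
symmetric-logarithmic-derivative equation for the twirled pure-state family:
`½(L ρ_B + ρ_B L) = ∑ᵢ Pᵢ (|ψ'⟩⟨ψ| + |ψ⟩⟨ψ'|) Pᵢ`, where
`ρ_B = ∑ᵢ Pᵢ |ψ⟩⟨ψ| Pᵢ`. -/
theorem qrf_sld_of_twirled_state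
    {H : Type*} [NormedAddCommGroup H] [InnerProductSpace ℂ H] [FiniteDimensional ℂ H]
    {ι : Type*} [Fintype ι]
    (ψ ψ' : H) (hψ : ‖ψ‖ = 1)
    (P : ι → H →L[ℂ] H)
    (hsa : ∀ i, IsSelfAdjoint (P i))
    (hidem : ∀ i, P i * P i = P i)
    (horth : ∀ i j, i ≠ j → P i * P j = 0)
    (hsum : ∑ i, P i = 1)
    (ψi φi : ι → H)
    (hψi : ∀ i, ψi i = ((Real.sqrt (((inner ℂ ψ (P i ψ) : ℂ)).re) : ℂ))⁻¹ • P i ψ)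
    (hφi : ∀ i, φi i = ((Real.sqrt (((inner ℂ ψ (P i ψ) : ℂ)).re) : ℂ))⁻¹ •
        ((2 : ℂ) • P i ψ' - (inner ℂ (ψi i) ψ' : ℂ) • ψi i))
    (ρB L : H →L[ℂ] H)
    (hρB : ∀ v, ρB v = ∑ i, (inner ℂ ψ (P i v) : ℂ) • P i ψ)
    (hL : ∀ v, L v = ∑ i, (if 0 < ((inner ℂ ψ (P i ψ) : ℂ)).re
        then (inner ℂ (ψi i) v : ℂ) • φi i + (inner ℂ (φi i) v : ℂ) • ψi i
        else 0)) :
    ∀ v, (1 / 2 : ℂ) • (L (ρB v) + ρB (L v))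
      = ∑ i, ((inner ℂ ψ (P i v) : ℂ) • P i ψ' + (inner ℂ ψ' (P i v) : ℂ) • P i ψ) := by
  classical
  have hadj : ∀ (i : ι) (x y : H), (inner ℂ (P i x) y : ℂ) = inner ℂ x (P i y) := fun i x y =>
    (ContinuousLinearMap.isSelfAdjoint_iff_isSymmetric.mp (hsa i)) x y
  have hPP : ∀ (i j : ι) (w : H), P i (P j w) = if i = j then P i w else 0 := by
    intro i j w
    by_cases h : i = j
    · subst h
      simpa [ContinuousLinearMap.mul_apply] using DFunLike.congr_fun (hidem i) w
    · simpa [ContinuousLinearMap.mul_apply, h] using DFunLike.congr_fun (horth i j h) w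
  have hipP : ∀ (i j : ι) (x w : H),
      (inner ℂ (P i x) (P j w) : ℂ) = if i = j then inner ℂ x (P i w) else 0 := by
    intro i j x w
    rw [hadj i x (P j w), hPP i j w]
    split <;> simp
  have hself : ∀ i, (inner ℂ ψ (P i ψ) : ℂ) = ((‖P i ψ‖ : ℝ) : ℂ) ^ 2 := by
    intro i
    have h1 : (inner ℂ ψ (P i ψ) : ℂ) = inner ℂ (P i ψ) (P i ψ) := by
      rw [hipP i i ψ ψ, if_pos rfl]
    rw [h1, inner_self_eq_norm_sq_to_K]
    exact rfl
  have hre : ∀ i, ((inner ℂ ψ (P i ψ) : ℂ)).re = ‖P i ψ‖ ^ 2 := by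
    intro i
    rw [hself i, ← Complex.ofReal_pow, Complex.ofReal_re]
  have hsqrt : ∀ i, Real.sqrt (((inner ℂ ψ (P i ψ) : ℂ)).re) = ‖P i ψ‖ := by
    intro i
    rw [hre i, Real.sqrt_sq (norm_nonneg _)]
  have hzero : ∀ i, ¬ 0 < ((inner ℂ ψ (P i ψ) : ℂ)).re → P i ψ = 0 := by
    intro i h
    rw [hre i] at h
    have h0 : ‖P i ψ‖ ^ 2 = 0 := le_antisymm (not_lt.mp h) (by positivity)
    exact norm_eq_zero.mp (pow_eq_zero_iff (n := 2) (by norm_num) |>.mp h0)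
  intro v
  rw [hL (ρB v), hρB (L v), hρB v, ← Finset.sum_add_distrib, Finset.smul_sum]
  refine Finset.sum_congr rfl fun i _ => ?_
  by_cases hq : 0 < ((inner ℂ ψ (P i ψ) : ℂ)).re
  · -- positive-weight case
    have hn : ‖P i ψ‖ ≠ 0 := by
      intro h0
      rw [hre i, h0] at hq
      simp at hq
    have hnC : ((‖P i ψ‖ : ℝ) : ℂ) ≠ 0 := by exact_mod_cast hn
    have hconj_n : (starRingEnd ℂ) ((‖P i ψ‖ : ℝ) : ℂ) = ((‖P i ψ‖ : ℝ) : ℂ) :=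
      Complex.conj_ofReal _
    have hψic : ψi i = (((‖P i ψ‖ : ℝ) : ℂ))⁻¹ • P i ψ := by rw [hψi i, hsqrt i]
    have ha : (inner ℂ (ψi i) ψ' : ℂ) = (((‖P i ψ‖ : ℝ) : ℂ))⁻¹ * inner ℂ ψ (P i ψ') := by
      rw [hψic, inner_smul_left, map_inv₀, hconj_n, hadj i ψ ψ']
    have hφic : φi i = (((‖P i ψ‖ : ℝ) : ℂ))⁻¹ • ((2 : ℂ) • P i ψ' -
        ((((‖P i ψ‖ : ℝ) : ℂ))⁻¹ * (inner ℂ ψ (P i ψ') : ℂ) * (((‖P i ψ‖ : ℝ) : ℂ))⁻¹) • P i ψ) := by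
      rw [hφi i, hsqrt i, ha, hψic, smul_smul]
    have hconj_e : (starRingEnd ℂ) (inner ℂ ψ (P i ψ') : ℂ) = inner ℂ ψ' (P i ψ) := by
      rw [inner_conj_symm, hadj i ψ' ψ]
    have E1 : (inner ℂ (ψi i) (∑ j, (inner ℂ ψ (P j v) : ℂ) • P j ψ) : ℂ)
        = inner ℂ ψ (P i v) * ((‖P i ψ‖ : ℝ) : ℂ) := by
      rw [hψic, inner_smul_left, inner_sum]
      simp only [inner_smul_right, hipP, mul_ite, mul_zero, Finset.sum_ite_eq,
        Finset.mem_univ, if_true, map_inv₀, hconj_n]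
      rw [hself i]
      field_simp
    have E2 : (inner ℂ (φi i) (∑ j, (inner ℂ ψ (P j v) : ℂ) • P j ψ) : ℂ)
        = inner ℂ ψ (P i v) * inner ℂ ψ' (P i ψ) * (((‖P i ψ‖ : ℝ) : ℂ))⁻¹ := by
      rw [hφic, inner_smul_left, inner_sub_left, inner_smul_left, inner_smul_left,
        inner_sum, inner_sum]
      simp only [inner_smul_right, hipP, mul_ite, mul_zero, Finset.sum_ite_eq,
        Finset.mem_univ, if_true, map_inv₀, hconj_n, map_mul, hconj_e, map_ofNat]
      rw [hself i]
      field_simp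
      ring
    have E3 : (inner ℂ ψ (P i (L v)) : ℂ)
        = inner ℂ ψ (P i v) * inner ℂ ψ (P i ψ') * ((((‖P i ψ‖ : ℝ) : ℂ))⁻¹ * (((‖P i ψ‖ : ℝ) : ℂ))⁻¹)
          + 2 * inner ℂ ψ' (P i v)
          - inner ℂ ψ' (P i ψ) * inner ℂ ψ (P i v)
            * ((((‖P i ψ‖ : ℝ) : ℂ))⁻¹ * (((‖P i ψ‖ : ℝ) : ℂ))⁻¹) := by
      rw [← hadj i ψ (L v), hL v, inner_sum]
      rw [Finset.sum_eq_single i ?_ ?_]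
      · rw [if_pos hq, hψic, hφic]
        simp only [inner_add_right, inner_smul_right, inner_smul_left, inner_sub_right,
          inner_sub_left, map_inv₀, hconj_n, map_mul, hconj_e, map_ofNat,
          hipP i i, if_pos rfl, hadj i ψ v, hadj i ψ ψ', hadj i ψ' v, hadj i ψ' ψ]
        rw [hself i]
        simp only [if_true]
        have h8 : (((‖P i ψ‖ : ℝ) : ℂ)) ^ 8 * ((((‖P i ψ‖ : ℝ) : ℂ))⁻¹) ^ 8 = 1 := by
          rw [← mul_pow, mul_inv_cancel₀ hnC, one_pow]
        field_simp
        ring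
      · intro j _ hj
        have hij : i ≠ j := Ne.symm hj
        split
        · rw [hψi j, hφi j, hψi j]
          simp [inner_add_right, inner_smul_right, inner_sub_right, hipP, hij]
        · simp
      · intro h
        exact absurd (Finset.mem_univ i) h
    rw [if_pos hq, E1, E2, E3, hψic, hφic]
    match_scalars
    next => field_simp
    next =>
      have hNN : (((‖P i ψ‖ : ℝ) : ℂ)) * ((((‖P i ψ‖ : ℝ) : ℂ))⁻¹) = 1 := mul_inv_cancel₀ hnC
      linear_combination (-((inner ℂ ψ (P i v) : ℂ) * inner ℂ ψ (P i ψ')) / 2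
        * (((((‖P i ψ‖ : ℝ) : ℂ))⁻¹) * ((((‖P i ψ‖ : ℝ) : ℂ))⁻¹))) * hNN
  · -- zero-weight case
    have h0 : P i ψ = 0 := hzero i hq
    have hc : (inner ℂ ψ (P i v) : ℂ) = 0 := by
      rw [← hadj i ψ v, h0, inner_zero_left]
    have hLc : (inner ℂ ψ (P i (L v)) : ℂ) = 0 := by
      rw [← hadj i ψ (L v), h0, inner_zero_left]
    rw [if_neg hq, hc, hLc, h0]
    simp
end

section
/- Bound on the remainder of the limit formula for the quantum Fisher information of Gaussian states: Let K be the 2N×2N block matrix [[I, 0], [0, −I]], let S be a 2N×2N complex matrix with S K S† = K, let D be the real diagonal 2N×2N matrix diag(λ₁, …, λ_N, λ₁, …, λ_N) with all λ_k ≥ λ_min for some λ_min > 1, and set σ := S D S† and A := K σ (so σ = S D S† is a Williamson decomposition of a covariance matrix). Let V and W be Hermitian 2N×2N matrices and set V̇ := K V and Ẇ := K W. Then A is invertible, the numbers tr[(A V̇)²] and tr[(A Ẇ)²] are nonnegative reals, for every n ≥ 1 one has |tr(A^{−n} V̇ A^{−n} Ẇ)| ≤ √(tr[(A V̇)²]) ·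 √(tr[(A Ẇ)²]) · λ_min^{−2n−2}, and consequently for every M ≥ 0 the series R_M := ½ ∑_{n=M+1}^{∞} tr(A^{−n} V̇ A^{−n} Ẇ) converges absolutely with |R_M| ≤ √(tr[(A V̇)²]) · √(tr[(A Ẇ)²]) / (2 λ_min^{2M+2} (λ_min² − 1)). -/
/-- Bound on the remainder of the limit formula for the quantum Fisher
information of Gaussian states: with `σ = S D S†` a Williamson decomposition
(`S` complex-form symplectic, `D = diag(λ₁,…,λ_N,λ₁,…,λ_N)`, all `λ_k ≥ λ_min > 1`)
and `A = K σ`, for Hermitian `V`, `W` (derivatives of the covariance matrix,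
with `V̇ = K V`, `Ẇ = K W`): `A` is invertible, `tr[(A V̇)²]` and `tr[(A Ẇ)²]`
are nonnegative reals, each term of the series satisfies
`|tr(A⁻ⁿ V̇ A⁻ⁿ Ẇ)| ≤ √tr[(A V̇)²] √tr[(A Ẇ)²] / λ_min^(2n+2)`, and for every `M`
the remainder `R_M = ½ ∑_{n>M} tr(A⁻ⁿ V̇ A⁻ⁿ Ẇ)` converges absolutely with
`|R_M| ≤ √tr[(A V̇)²] √tr[(A Ẇ)²] / (2 λ_min^(2M+2) (λ_min² − 1))`. -/
theorem gaussian_qfi_remainder_bound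
    {N : ℕ}
    (S V W : Matrix (Fin N ⊕ Fin N) (Fin N ⊕ Fin N) ℂ)
    (lam : Fin N → ℝ) (lamMin : ℝ)
    (hlamMin : 1 < lamMin) (hlam : ∀ k, lamMin ≤ lam k)
    (K D σ A : Matrix (Fin N ⊕ Fin N) (Fin N ⊕ Fin N) ℂ)
    (hK : K = Matrix.fromBlocks 1 0 0 (-1))
    (hD : D = Matrix.diagonal (Sum.elim (fun k => (lam k : ℂ)) fun k => (lam k : ℂ)))
    (hS : S * K * S.conjTranspose = K)
    (hσ : σ = S * D * S.conjTranspose)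
    (hA : A = K * σ)
    (hV : V.IsHermitian) (hW : W.IsHermitian) :
    IsUnit A ∧
    (0 ≤ (((A * (K * V)) ^ 2).trace).re ∧ (((A * (K * V)) ^ 2).trace).im = 0) ∧
    (0 ≤ (((A * (K * W)) ^ 2).trace).re ∧ (((A * (K * W)) ^ 2).trace).im = 0) ∧
    (∀ n : ℕ, 1 ≤ n →
      ‖(A⁻¹ ^ n * (K * V) * A⁻¹ ^ n * (K * W)).trace‖
        ≤ Real.sqrt ((((A * (K * V)) ^ 2).trace).re)
            * Real.sqrt ((((A * (K * W)) ^ 2).trace).re)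
            * (lamMin ^ (2 * n + 2))⁻¹) ∧
    ∀ M : ℕ,
      Summable (fun n : ℕ =>
        ‖(A⁻¹ ^ (M + 1 + n) * (K * V) * A⁻¹ ^ (M + 1 + n) * (K * W)).trace‖) ∧
      ‖(1 / 2 : ℂ) * ∑' n : ℕ,
          (A⁻¹ ^ (M + 1 + n) * (K * V) * A⁻¹ ^ (M + 1 + n) * (K * W)).trace‖
        ≤ Real.sqrt ((((A * (K * V)) ^ 2).trace).re)
            * Real.sqrt ((((A * (K * W)) ^ 2).trace).re)
            / (2 * lamMin ^ (2 * M + 2) * (lamMin ^ 2 - 1)) := by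
  classical
  have hl0 : (0:ℝ) < lamMin := lt_trans one_pos hlamMin
  set κ : Fin N ⊕ Fin N → ℂ := Sum.elim (fun _ => (1:ℂ)) (fun _ => (-1:ℂ)) with hκdef
  set dv : Fin N ⊕ Fin N → ℝ := Sum.elim lam lam with hdvdef
  have hκsq : ∀ i, κ i * κ i = 1 := by rintro (i|i) <;> simp [hκdef]
  have hκstar : ∀ i, star (κ i) = κ i := by rintro (i|i) <;> simp [hκdef]
  have hκnorm : ∀ i, ‖κ i‖ = 1 := by rintro (i|i) <;> simp [hκdef]
  have hdge : ∀ i, lamMin ≤ dv i := by rintro (i|i) <;> exact hlam _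
  have hdpos : ∀ i, (0:ℝ) < dv i := fun i => lt_of_lt_of_le hl0 (hdge i)
  have hKdiag : K = Matrix.diagonal κ := by
    subst hK; ext i j
    rcases i with i|i <;> rcases j with j|j <;>
      simp [Matrix.diagonal_apply, Matrix.one_apply, apply_ite, hκdef]
  have hKK : K * K = 1 := by
    rw [hKdiag, Matrix.diagonal_mul_diagonal,
      show (fun i => κ i * κ i) = fun _ => (1:ℂ) from funext hκsq]
    exact Matrix.diagonal_one
  have hKH : K.conjTranspose = K := by
    rw [hKdiag, Matrix.diagonal_conjTranspose,
      show star κ = κ from funext fun i => hκstar i]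
  set T : Matrix (Fin N ⊕ Fin N) (Fin N ⊕ Fin N) ℂ := K * S with hTdef
  set U : Matrix (Fin N ⊕ Fin N) (Fin N ⊕ Fin N) ℂ := K * S.conjTranspose with hUdef
  have hTU : T * U = 1 := by
    calc T * U = K * (S * K * S.conjTranspose) := by
          rw [hTdef, hUdef]; simp only [Matrix.mul_assoc]
      _ = K * K := by rw [hS]
      _ = 1 := hKK
  have hUT : U * T = 1 := mul_eq_one_comm.mp hTU
  set e : Fin N ⊕ Fin N → ℂ := fun i => κ i * (dv i : ℂ) with hedef
  have he0 : ∀ i, e i ≠ 0 := by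
    intro i
    have h1 : κ i ≠ 0 := by rcases i with i|i <;> simp [hκdef]
    have h2 : ((dv i : ℂ)) ≠ 0 := by exact_mod_cast (hdpos i).ne'
    exact mul_ne_zero h1 h2
  have henorm : ∀ i, ‖e i‖ = dv i := by
    intro i
    rw [hedef]
    simp [norm_mul, hκnorm i, abs_of_pos (hdpos i)]
  have hAeq : A = T * Matrix.diagonal e * U := by
    have h1 : Matrix.diagonal e * Matrix.diagonal κ = D := by
      have hfun : (fun i => e i * κ i)
          = (Sum.elim (fun k => (lam k : ℂ)) fun k => (lam k : ℂ)) := by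
        funext i
        rcases i with i|i <;> simp [hedef, hκdef, hdvdef] <;> ring
      rw [Matrix.diagonal_mul_diagonal, hfun, hD]
    calc A = K * S * (Matrix.diagonal e * Matrix.diagonal κ) * S.conjTranspose := by
          rw [h1, hA, hσ]; simp only [Matrix.mul_assoc]
      _ = T * Matrix.diagonal e * U := by
          rw [hTdef, hUdef, hKdiag]; simp only [Matrix.mul_assoc]
  set einv : Fin N ⊕ Fin N → ℂ := fun i => (e i)⁻¹ with heinvdef
  have hEEinv : Matrix.diagonal e * Matrix.diagonal einv = 1 := by
    rw [Matrix.diagonal_mul_diagonal,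
      show (fun i => e i * einv i) = fun _ => (1:ℂ) from
        funext fun i => mul_inv_cancel₀ (he0 i)]
    exact Matrix.diagonal_one
  have hAinvEq : A * (T * Matrix.diagonal einv * U) = 1 := by
    rw [hAeq]
    calc T * Matrix.diagonal e * U * (T * Matrix.diagonal einv * U)
        = T * (Matrix.diagonal e * (U * T * (Matrix.diagonal einv * U))) := by
          simp only [Matrix.mul_assoc]
      _ = T * (Matrix.diagonal e * (Matrix.diagonal einv * U)) := by
          rw [hUT, Matrix.one_mul]
      _ = T * (Matrix.diagonal e * Matrix.diagonal einv * U) := by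
          simp only [Matrix.mul_assoc]
      _ = T * U := by rw [hEEinv, Matrix.one_mul]
      _ = 1 := hTU
  have hunitA : IsUnit A :=
    ⟨⟨A, T * Matrix.diagonal einv * U, hAinvEq, mul_eq_one_comm.mp hAinvEq⟩, rfl⟩
  have hAinv : A⁻¹ = T * Matrix.diagonal einv * U := Matrix.inv_eq_right_inv hAinvEq
  have hPow : ∀ n : ℕ, A⁻¹ ^ n = T * Matrix.diagonal (fun i => einv i ^ n) * U := by
    intro n
    induction n with
    | zero =>
        rw [pow_zero, show (fun i => einv i ^ 0) = fun _ => (1:ℂ) from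
          funext fun i => pow_zero _, Matrix.diagonal_one, Matrix.mul_one, hTU]
    | succ n ih =>
        rw [pow_succ, ih, hAinv]
        calc T * Matrix.diagonal (fun i => einv i ^ n) * U *
              (T * Matrix.diagonal einv * U)
            = T * (Matrix.diagonal (fun i => einv i ^ n) *
                (U * T * (Matrix.diagonal einv * U))) := by
              simp only [Matrix.mul_assoc]
          _ = T * (Matrix.diagonal (fun i => einv i ^ n) * Matrix.diagonal einv * U) := by
              rw [hUT, Matrix.one_mul]; simp only [Matrix.mul_assoc]
          _ = T * Matrix.diagonal (fun i => einv i ^ (n+1)) * U := by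
              rw [Matrix.diagonal_mul_diagonal,
                show (fun i => einv i ^ n * einv i) = fun i => einv i ^ (n+1) from
                  funext fun i => (pow_succ _ _).symm]
              simp only [Matrix.mul_assoc]
  have htrace4 : ∀ (f g : Fin N ⊕ Fin N → ℂ) (P Q : Matrix (Fin N ⊕ Fin N) (Fin N ⊕ Fin N) ℂ),
      (Matrix.diagonal f * P * (Matrix.diagonal g * Q)).trace
        = ∑ i, ∑ j, f i * P i j * (g j * Q j i) := by
    intro f g P Q
    rw [Matrix.trace]
    refine Finset.sum_congr rfl fun i _ => ?_
    rw [Matrix.diag_apply, Matrix.mul_apply]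
    refine Finset.sum_congr rfl fun j _ => ?_
    rw [Matrix.diagonal_mul, Matrix.diagonal_mul]
  have hcollapse : ∀ (f : Fin N ⊕ Fin N → ℂ) (P Q : Matrix (Fin N ⊕ Fin N) (Fin N ⊕ Fin N) ℂ),
      ((T * Matrix.diagonal f * U) * (K * P) * (T * Matrix.diagonal f * U) * (K * Q)).trace
        = ∑ i, ∑ j, f i * (U * (K * P) * T) i j * (f j * (U * (K * Q) * T) j i) := by
    intro f P Q
    have h1 : (T * Matrix.diagonal f * U) * (K * P) * (T * Matrix.diagonal f * U) * (K * Q)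
        = T * (Matrix.diagonal f * (U * (K * P) * T) * (Matrix.diagonal f * (U * (K * Q)))) := by
      simp only [Matrix.mul_assoc]
    rw [h1, Matrix.trace_mul_comm]
    have h2 : Matrix.diagonal f * (U * (K * P) * T) * (Matrix.diagonal f * (U * (K * Q))) * T
        = Matrix.diagonal f * (U * (K * P) * T) * (Matrix.diagonal f * (U * (K * Q) * T)) := by
      simp only [Matrix.mul_assoc]
    rw [h2, htrace4]
  set X : Matrix (Fin N ⊕ Fin N) (Fin N ⊕ Fin N) ℂ := U * (K * V) * T with hXdef
  set Y : Matrix (Fin N ⊕ Fin N) (Fin N ⊕ Fin N) ℂ := U * (K * W) * T with hYdef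
  have hsymm : ∀ (Z : Matrix (Fin N ⊕ Fin N) (Fin N ⊕ Fin N) ℂ), Z.IsHermitian → ∀ i j,
      (U * (K * Z) * T) j i = κ i * κ j * star ((U * (K * Z) * T) i j) := by
    intro Z hZ i j
    have hM : (U * (K * Z) * T).conjTranspose = K * (U * (K * Z) * T) * K := by
      have lhs : (U * (K * Z) * T).conjTranspose
          = S.conjTranspose * (K * (Z * (K * (S * K)))) := by
        rw [hUdef, hTdef]
        simp only [Matrix.conjTranspose_mul, hKH, hZ.eq,
          Matrix.conjTranspose_conjTranspose, Matrix.mul_assoc]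
      have rhs : K * (U * (K * Z) * T) * K
          = S.conjTranspose * (K * (Z * (K * (S * K)))) := by
        rw [hUdef, hTdef]
        calc K * (K * S.conjTranspose * (K * Z) * (K * S)) * K
            = K * K * (S.conjTranspose * (K * (Z * (K * (S * K))))) := by
              simp only [Matrix.mul_assoc]
          _ = _ := by rw [hKK, Matrix.one_mul]
      rw [lhs, rhs]
    have h1 : star ((U * (K * Z) * T) j i) = κ i * (U * (K * Z) * T) i j * κ j := by
      have h := congrArg (fun Mx : Matrix (Fin N ⊕ Fin N) (Fin N ⊕ Fin N) ℂ => Mx i j) hM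
      simp only [Matrix.conjTranspose_apply] at h
      rw [h, hKdiag, Matrix.mul_diagonal, Matrix.diagonal_mul]
    have h2 : (U * (K * Z) * T) j i = star (κ i * (U * (K * Z) * T) i j * κ j) := by
      rw [← h1, star_star]
    rw [h2, star_mul, star_mul, hκstar, hκstar]
    ring
  have hXsym : ∀ i j, X j i = κ i * κ j * star (X i j) := by
    intro i j; rw [hXdef]; exact hsymm V hV i j
  have hYsym : ∀ i j, Y j i = κ i * κ j * star (Y i j) := by
    intro i j; rw [hYdef]; exact hsymm W hW i j
  set SX : ℝ := ∑ i, ∑ j, dv i * dv j * Complex.normSq (X i j) with hSXdef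
  set SY : ℝ := ∑ i, ∑ j, dv i * dv j * Complex.normSq (Y i j) with hSYdef
  have hSXnn : 0 ≤ SX := Finset.sum_nonneg fun i _ => Finset.sum_nonneg fun j _ =>
    mul_nonneg (mul_nonneg (hdpos i).le (hdpos j).le) (Complex.normSq_nonneg _)
  have hSYnn : 0 ≤ SY := Finset.sum_nonneg fun i _ => Finset.sum_nonneg fun j _ =>
    mul_nonneg (mul_nonneg (hdpos i).le (hdpos j).le) (Complex.normSq_nonneg _)
  have htrsq : ∀ (Z : Matrix (Fin N ⊕ Fin N) (Fin N ⊕ Fin N) ℂ), Z.IsHermitian →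
      ((A * (K * Z)) ^ 2).trace
        = ((∑ i, ∑ j, dv i * dv j * Complex.normSq ((U * (K * Z) * T) i j) : ℝ) : ℂ) := by
    intro Z hZ
    rw [sq]
    have hgrp : A * (K * Z) * (A * (K * Z))
        = (T * Matrix.diagonal e * U) * (K * Z) * (T * Matrix.diagonal e * U) * (K * Z) := by
      rw [← hAeq]; simp only [Matrix.mul_assoc]
    rw [hgrp, hcollapse]
    push_cast
    refine Finset.sum_congr rfl fun i _ => Finset.sum_congr rfl fun j _ => ?_
    rw [hsymm Z hZ i j]
    have hr : e i * (U * (K * Z) * T) i j * (e j * (κ i * κ j * star ((U * (K * Z) * T) i j)))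
        = (κ i * κ i) * (κ j * κ j) * ((dv i : ℂ) * (dv j : ℂ))
            * ((U * (K * Z) * T) i j * star ((U * (K * Z) * T) i j)) := by
      rw [hedef]; ring
    rw [hr, hκsq i, hκsq j]
    rw [show ((U * (K * Z) * T) i j * star ((U * (K * Z) * T) i j))
        = ((Complex.normSq ((U * (K * Z) * T) i j) : ℝ) : ℂ) from Complex.mul_conj _]
    push_cast
    ring
  have htrV : ((A * (K * V)) ^ 2).trace = ((SX : ℝ) : ℂ) := by
    rw [htrsq V hV, hSXdef]
  have htrW : ((A * (K * W)) ^ 2).trace = ((SY : ℝ) : ℂ) := by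
    rw [htrsq W hW, hSYdef]
  have hxpow : ∀ (x : ℝ), lamMin ≤ x → ∀ n : ℕ, (x⁻¹) ^ n ≤ (lamMin⁻¹) ^ (n+1) * x := by
    intro x hx n
    have hx0 : 0 < x := lt_of_lt_of_le hl0 hx
    have hp : lamMin ^ (n+1) ≤ x ^ (n+1) := pow_le_pow_left₀ hl0.le hx _
    have h1 : (x⁻¹) ^ n = (x ^ (n+1))⁻¹ * x := by
      rw [inv_pow, pow_succ, mul_inv]
      field_simp
    rw [h1, inv_pow]
    exact mul_le_mul_of_nonneg_right
      (inv_anti₀ (pow_pos hl0 _) hp) hx0.le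
  have hCS : (∑ i, ∑ j, dv i * dv j * (‖X i j‖ * ‖Y i j‖))
      ≤ Real.sqrt SX * Real.sqrt SY := by
    have key := Real.sum_mul_le_sqrt_mul_sqrt (Finset.univ : Finset ((Fin N ⊕ Fin N) × (Fin N ⊕ Fin N)))
      (fun p => Real.sqrt (dv p.1 * dv p.2) * ‖X p.1 p.2‖)
      (fun p => Real.sqrt (dv p.1 * dv p.2) * ‖Y p.1 p.2‖)
    have hdd : ∀ i j : Fin N ⊕ Fin N, (0:ℝ) ≤ dv i * dv j := fun i j =>
      mul_nonneg (hdpos i).le (hdpos j).le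
    have e1 : (∑ p : (Fin N ⊕ Fin N) × (Fin N ⊕ Fin N),
        (Real.sqrt (dv p.1 * dv p.2) * ‖X p.1 p.2‖) * (Real.sqrt (dv p.1 * dv p.2) * ‖Y p.1 p.2‖))
        = ∑ i, ∑ j, dv i * dv j * (‖X i j‖ * ‖Y i j‖) := by
      rw [← Finset.sum_product']
      refine Finset.sum_congr rfl fun p _ => ?_
      rw [show (Real.sqrt (dv p.1 * dv p.2) * ‖X p.1 p.2‖) * (Real.sqrt (dv p.1 * dv p.2) * ‖Y p.1 p.2‖)
          = (Real.sqrt (dv p.1 * dv p.2) * Real.sqrt (dv p.1 * dv p.2)) * (‖X p.1 p.2‖ * ‖Y p.1 p.2‖) from by ring,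
        Real.mul_self_sqrt (hdd p.1 p.2)]
    have e2 : (∑ p : (Fin N ⊕ Fin N) × (Fin N ⊕ Fin N),
        (Real.sqrt (dv p.1 * dv p.2) * ‖X p.1 p.2‖) ^ 2) = SX := by
      rw [hSXdef, ← Finset.sum_product']
      refine Finset.sum_congr rfl fun p _ => ?_
      rw [mul_pow, Real.sq_sqrt (hdd p.1 p.2), show ‖X p.1 p.2‖ ^ 2 = Complex.normSq (X p.1 p.2) from by
        rw [Complex.sq_norm]]
    have e3 : (∑ p : (Fin N ⊕ Fin N) × (Fin N ⊕ Fin N),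
        (Real.sqrt (dv p.1 * dv p.2) * ‖Y p.1 p.2‖) ^ 2) = SY := by
      rw [hSYdef, ← Finset.sum_product']
      refine Finset.sum_congr rfl fun p _ => ?_
      rw [mul_pow, Real.sq_sqrt (hdd p.1 p.2), show ‖Y p.1 p.2‖ ^ 2 = Complex.normSq (Y p.1 p.2) from by
        rw [Complex.sq_norm]]
    rw [e1, e2, e3] at key
    exact key
  have hterm : ∀ n : ℕ,
      ‖(A⁻¹ ^ n * (K * V) * A⁻¹ ^ n * (K * W)).trace‖
        ≤ Real.sqrt SX * Real.sqrt SY * (lamMin ^ (2 * n + 2))⁻¹ := by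
    intro n
    have hgrp : A⁻¹ ^ n * (K * V) * A⁻¹ ^ n * (K * W)
        = (T * Matrix.diagonal (fun i => einv i ^ n) * U) * (K * V) *
            (T * Matrix.diagonal (fun i => einv i ^ n) * U) * (K * W) := by
      rw [hPow n]
    rw [hgrp, hcollapse, ← hXdef, ← hYdef]
    have hperterm : ∀ i j : Fin N ⊕ Fin N,
        ‖einv i ^ n * X i j * (einv j ^ n * Y j i)‖
          ≤ (lamMin ^ (2 * n + 2))⁻¹ * (dv i * dv j * (‖X i j‖ * ‖Y i j‖)) := by
      intro i j
      have hnY : ‖Y j i‖ = ‖Y i j‖ := by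
        rw [hYsym i j, norm_mul, norm_mul, hκnorm, hκnorm, norm_star]
        ring
      have hne : ‖einv i ^ n * X i j * (einv j ^ n * Y j i)‖
          = ((dv i)⁻¹) ^ n * ‖X i j‖ * (((dv j)⁻¹) ^ n * ‖Y i j‖) := by
        simp only [heinvdef, norm_mul, norm_pow, norm_inv, henorm, hnY]
      rw [hne]
      have hbx := hxpow (dv i) (hdge i) n
      have hby := hxpow (dv j) (hdge j) n
      have step : ((dv i)⁻¹) ^ n * ‖X i j‖ * (((dv j)⁻¹) ^ n * ‖Y i j‖)
          ≤ ((lamMin⁻¹) ^ (n+1) * dv i) * ‖X i j‖ * (((lamMin⁻¹) ^ (n+1) * dv j) * ‖Y i j‖) := by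
        apply mul_le_mul
        · exact mul_le_mul_of_nonneg_right hbx (norm_nonneg _)
        · exact mul_le_mul_of_nonneg_right hby (norm_nonneg _)
        · exact mul_nonneg (pow_nonneg (inv_nonneg.mpr (hdpos j).le) _) (norm_nonneg _)
        · exact mul_nonneg (mul_nonneg (pow_nonneg (inv_nonneg.mpr hl0.le) _) (hdpos i).le)
            (norm_nonneg _)
      refine step.trans (le_of_eq ?_)
      rw [← inv_pow]
      ring
    calc ‖∑ i, ∑ j, einv i ^ n * X i j * (einv j ^ n * Y j i)‖
        ≤ ∑ i, ∑ j, ‖einv i ^ n * X i j * (einv j ^ n * Y j i)‖ :=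
          (norm_sum_le _ _).trans (Finset.sum_le_sum fun i _ => norm_sum_le _ _)
      _ ≤ ∑ i, ∑ j, (lamMin ^ (2 * n + 2))⁻¹ * (dv i * dv j * (‖X i j‖ * ‖Y i j‖)) :=
          Finset.sum_le_sum fun i _ => Finset.sum_le_sum fun j _ => hperterm i j
      _ = (lamMin ^ (2 * n + 2))⁻¹ * ∑ i, ∑ j, dv i * dv j * (‖X i j‖ * ‖Y i j‖) := by
          rw [Finset.mul_sum]
          exact Finset.sum_congr rfl fun i _ => (Finset.mul_sum _ _ _).symm
      _ ≤ (lamMin ^ (2 * n + 2))⁻¹ * (Real.sqrt SX * Real.sqrt SY) :=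
          mul_le_mul_of_nonneg_left hCS (inv_nonneg.mpr (pow_nonneg hl0.le _))
      _ = Real.sqrt SX * Real.sqrt SY * (lamMin ^ (2 * n + 2))⁻¹ := by ring
  have htrVre : (((A * (K * V)) ^ 2).trace).re = SX := by rw [htrV]; exact Complex.ofReal_re _
  have htrWre : (((A * (K * W)) ^ 2).trace).re = SY := by rw [htrW]; exact Complex.ofReal_re _
  refine ⟨hunitA, ⟨?_, ?_⟩, ⟨?_, ?_⟩, ?_, ?_⟩
  · rw [htrVre]; exact hSXnn
  · rw [htrV]; exact Complex.ofReal_im _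
  · rw [htrWre]; exact hSYnn
  · rw [htrW]; exact Complex.ofReal_im _
  · intro n _
    rw [htrVre, htrWre]
    exact hterm n
  · intro M
    rw [htrVre, htrWre]
    set r : ℝ := (lamMin ^ 2)⁻¹ with hrdef
    have hL2 : (1:ℝ) < lamMin ^ 2 := one_lt_pow₀ hlamMin (by norm_num)
    have hr0 : 0 ≤ r := inv_nonneg.mpr (by positivity)
    have hr1 : r < 1 := by
      rw [hrdef]
      exact inv_lt_one_of_one_lt₀ hL2
    set C : ℝ := Real.sqrt SX * Real.sqrt SY * (lamMin ^ (2 * M + 4))⁻¹ with hCdef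
    have hboundn : ∀ n : ℕ,
        ‖(A⁻¹ ^ (M + 1 + n) * (K * V) * A⁻¹ ^ (M + 1 + n) * (K * W)).trace‖ ≤ C * r ^ n := by
      intro n
      refine (hterm (M + 1 + n)).trans (le_of_eq ?_)
      rw [hCdef, hrdef, show 2 * (M + 1 + n) + 2 = (2 * M + 4) + 2 * n from by ring,
        pow_add, mul_inv, pow_mul, inv_pow]
      ring
    have hgeo : Summable (fun n : ℕ => C * r ^ n) :=
      (summable_geometric_of_lt_one hr0 hr1).mul_left C
    have hsumm : Summable (fun n : ℕ =>
        ‖(A⁻¹ ^ (M + 1 + n) * (K * V) * A⁻¹ ^ (M + 1 + n) * (K * W)).trace‖) :=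
      Summable.of_nonneg_of_le (fun n => norm_nonneg _) hboundn hgeo
    refine ⟨hsumm, ?_⟩
    have htail : (∑' n : ℕ, ‖(A⁻¹ ^ (M + 1 + n) * (K * V) * A⁻¹ ^ (M + 1 + n) * (K * W)).trace‖)
        ≤ C * (1 - r)⁻¹ := by
      have h := Summable.tsum_le_tsum hboundn hsumm hgeo
      rwa [tsum_mul_left, tsum_geometric_of_lt_one hr0 hr1] at h
    calc ‖(1 / 2 : ℂ) * ∑' n : ℕ,
          (A⁻¹ ^ (M + 1 + n) * (K * V) * A⁻¹ ^ (M + 1 + n) * (K * W)).trace‖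
        = (1 / 2 : ℝ) * ‖∑' n : ℕ,
            (A⁻¹ ^ (M + 1 + n) * (K * V) * A⁻¹ ^ (M + 1 + n) * (K * W)).trace‖ := by
          rw [norm_mul]; norm_num
      _ ≤ (1 / 2 : ℝ) * (C * (1 - r)⁻¹) := by
          refine mul_le_mul_of_nonneg_left ((norm_tsum_le_tsum_norm hsumm).trans htail)
            (by norm_num)
      _ = Real.sqrt SX * Real.sqrt SY / (2 * lamMin ^ (2 * M + 2) * (lamMin ^ 2 - 1)) := by
          rw [hCdef, hrdef, show 2 * M + 4 = (2 * M + 2) + 2 from by ring, pow_add]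
          have h1 : lamMin ^ (2 * M + 2) ≠ 0 := by positivity
          have h2 : lamMin ^ 2 ≠ 0 := by positivity
          have h3 : lamMin ^ 2 - 1 ≠ 0 := sub_ne_zero.mpr (ne_of_gt hL2)
          field_simp
end

section
/- Blow-up of the derivative of the Gaussian quantum Fisher information at a point of purity (analytic core of the theorem that the two-variable Taylor expansion of the QFI does not exist): Let f : ℝ × ℝ → ℝ be twice continuously differentiable, let (p₀, ε₀) be a point with f(p₀, ε₀) = 1, suppose f(p, ε) ≥ 1 for all (p, ε) in some neighborhood of (p₀, ε₀) with p ≥ p₀, and assume ∂_p f(p₀, ε₀) > 0 and ∂²_{εε} f(p₀, ε₀) > 0. Define, for p > p₀ close to p₀, g(p) := (∂_ε f(p, ε₀))² / (f(p, ε₀)² − 1) (well defined since f(p, ε₀) > 1 there). Then (g(p) − ∂²_{εε} f(p₀, ε₀)) / (p − p₀) tends to −∞ as p → p₀ from the right; in particular the function equal to g(p) for p > p₀ and to ∂²_{εε} f(p₀, ε₀) at p = p₀ has right derivative −∞ at p₀, so no first-order Taylor expansion of the form g(p₀ + dp) = g(p₀) + c·dp + O(dp²) exists. -/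
open Filter Topology

/-- Blow-up of the derivative of the Gaussian quantum Fisher information at a
point of purity: if `f` (a symplectic eigenvalue, as a function of a purity
parameter `p` and the estimated parameter `ε`) is `C²`, equals `1` at
`(p₀, ε₀)`, satisfies `f ≥ 1` near `(p₀, ε₀)` for `p ≥ p₀`, and has
`∂_p f(p₀, ε₀) > 0` and `∂²_εε f(p₀, ε₀) > 0`, then
`(g(p) − ∂²_εε f(p₀, ε₀)) / (p − p₀) → −∞` as `p → p₀⁺`, where
`g(p) = (∂_ε f(p, ε₀))² / (f(p, ε₀)² − 1)`; hence no first-order Taylor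
expansion of the QFI contribution exists at the point of purity. -/
theorem qfi_blowup_at_purity
    (f : ℝ × ℝ → ℝ) (p₀ ε₀ : ℝ)
    (hf : ContDiff ℝ 2 f)
    (h1 : f (p₀, ε₀) = 1)
    (hge : ∀ᶠ q in nhds (p₀, ε₀), p₀ ≤ q.1 → 1 ≤ f q)
    (hp : 0 < deriv (fun p => f (p, ε₀)) p₀)
    (hεε : 0 < deriv (deriv fun ε => f (p₀, ε)) ε₀) :
    Filter.Tendsto
      (fun p => ((deriv (fun ε => f (p, ε)) ε₀) ^ 2 / ((f (p, ε₀)) ^ 2 - 1)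
          - deriv (deriv fun ε => f (p₀, ε)) ε₀) / (p - p₀))
      (nhdsWithin p₀ (Set.Ioi p₀)) Filter.atBot := by
  have hfd : Differentiable ℝ f := hf.differentiable two_ne_zero
  set B := deriv (deriv fun ε => f (p₀, ε)) ε₀ with hBdef
  set u : ℝ → ℝ := fun p => deriv (fun ε => f (p, ε)) ε₀ with hudef
  set v : ℝ → ℝ := fun p => (f (p, ε₀)) ^ 2 - 1 with hvdef
  set A := deriv (fun p => f (p, ε₀)) p₀ with hAdef
  -- u in terms of the fderiv
  have hu_eq : ∀ p : ℝ, u p = fderiv ℝ f (p, ε₀) (0, 1) := by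
    intro p
    have hc : HasDerivAt (fun ε : ℝ => (p, ε)) ((0 : ℝ), (1 : ℝ)) ε₀ :=
      (hasDerivAt_const ε₀ p).prodMk (hasDerivAt_id ε₀)
    exact ((hfd (p, ε₀)).hasFDerivAt.comp_hasDerivAt ε₀ hc).deriv
  -- u p₀ = 0 since ε₀ is a local minimum of ε ↦ f (p₀, ε)
  have hu0 : u p₀ = 0 := by
    have hmin : IsLocalMin (fun ε => f (p₀, ε)) ε₀ := by
      have ht : Filter.Tendsto (fun ε : ℝ => ((p₀ : ℝ), ε)) (𝓝 ε₀) (𝓝 (p₀, ε₀)) :=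
        (continuous_const.prodMk continuous_id).tendsto ε₀
      have h : ∀ᶠ ε in 𝓝 ε₀, f (p₀, ε₀) ≤ f (p₀, ε) := by
        filter_upwards [ht.eventually hge] with ε hε
        rw [h1]; exact hε le_rfl
      exact h
    exact hmin.deriv_eq_zero
  -- u is differentiable at p₀
  have hudiff : DifferentiableAt ℝ u p₀ := by
    have hfC1 : ContDiff ℝ 1 (fderiv ℝ f) := hf.fderiv_right (by norm_num)
    have h2 : DifferentiableAt ℝ (fun p : ℝ => fderiv ℝ f (p, ε₀)) p₀ :=
      ((hfC1.differentiable one_ne_zero) (p₀, ε₀)).comp p₀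
        (differentiableAt_id.prodMk (differentiableAt_const ε₀))
    have h3 : DifferentiableAt ℝ (fun p : ℝ => fderiv ℝ f (p, ε₀) ((0 : ℝ), (1 : ℝ))) p₀ :=
      h2.clm_apply (differentiableAt_const _)
    rw [show u = fun p : ℝ => fderiv ℝ f (p, ε₀) ((0 : ℝ), (1 : ℝ)) from funext hu_eq]
    exact h3
  -- derivative facts for v
  have hA : HasDerivAt (fun p => f (p, ε₀)) A p₀ := by
    have hdiff : DifferentiableAt ℝ (fun p : ℝ => f (p, ε₀)) p₀ :=
      (hfd (p₀, ε₀)).comp p₀ (differentiableAt_id.prodMk (differentiableAt_const ε₀))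
    exact hdiff.hasDerivAt
  have hvA : HasDerivAt v (2 * A) p₀ := by
    have h := (hA.pow 2).sub_const 1
    simp only [h1, Nat.cast_ofNat, pow_one, one_pow, mul_one] at h
    exact h
  have hv0 : v p₀ = 0 := by simp [hvdef, h1]
  -- slope limits along 𝓝[>] p₀
  have hmono : 𝓝[>] p₀ ≤ 𝓝[≠] p₀ :=
    nhdsWithin_mono p₀ (fun x hx => ne_of_gt hx)
  have hslopeu : Tendsto (slope u p₀) (𝓝[>] p₀) (𝓝 (deriv u p₀)) :=
    (hasDerivAt_iff_tendsto_slope.mp hudiff.hasDerivAt).mono_left hmono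
  have hslopev : Tendsto (slope v p₀) (𝓝[>] p₀) (𝓝 (2 * A)) :=
    (hasDerivAt_iff_tendsto_slope.mp hvA).mono_left hmono
  have h2A : (2 : ℝ) * A ≠ 0 := by positivity
  have hslopev_inv : Tendsto (fun p => (slope v p₀ p)⁻¹) (𝓝[>] p₀) (𝓝 ((2 * A)⁻¹)) :=
    hslopev.inv₀ h2A
  have hd0 : Tendsto (fun p : ℝ => p - p₀) (𝓝[>] p₀) (𝓝 0) := by
    have : Tendsto (fun p : ℝ => p - p₀) (𝓝 p₀) (𝓝 (p₀ - p₀)) :=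
      (continuous_id.sub continuous_const).tendsto p₀
    simpa using this.mono_left nhdsWithin_le_nhds
  -- main limit : u² / v → 0
  have key : Tendsto (fun p => u p ^ 2 / v p) (𝓝[>] p₀) (𝓝 0) := by
    have hprod : Tendsto (fun p => (slope u p₀ p) ^ 2 * ((p - p₀) * (slope v p₀ p)⁻¹))
        (𝓝[>] p₀) (𝓝 ((deriv u p₀) ^ 2 * (0 * (2 * A)⁻¹))) :=
      (hslopeu.pow 2).mul (hd0.mul hslopev_inv)
    rw [zero_mul, mul_zero] at hprod
    refine hprod.congr' ?_
    filter_upwards [self_mem_nhdsWithin] with p hp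
    have hd : p - p₀ ≠ 0 := sub_ne_zero.mpr (ne_of_gt hp)
    rw [slope_def_field, slope_def_field, hu0, hv0, sub_zero, sub_zero]
    rcases eq_or_ne (v p) 0 with hvp | hvp
    · simp [hvp, hd]
    · field_simp
  -- conclude
  have hnum : Tendsto (fun p => u p ^ 2 / v p - B) (𝓝[>] p₀) (𝓝 (-B)) := by
    simpa using key.sub_const B
  have hinv : Tendsto (fun p : ℝ => (p - p₀)⁻¹) (𝓝[>] p₀) atTop := by
    apply tendsto_inv_nhdsGT_zero.comp
    refine tendsto_nhdsWithin_of_tendsto_nhds_of_eventually_within _ hd0 ?_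
    filter_upwards [self_mem_nhdsWithin] with p hp
    exact sub_pos.mpr (Set.mem_Ioi.mp hp)
  have hfinal : Tendsto (fun p => (u p ^ 2 / v p - B) * (p - p₀)⁻¹) (𝓝[>] p₀) atBot :=
    Filter.Tendsto.neg_mul_atTop (neg_lt_zero.mpr hεε) hnum hinv
  simpa [div_eq_mul_inv] using hfinal
end
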